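/- arXiv:2501.16858 — 7 statements merged into one kernel-verified Lean document; each statement's English description precedes it below -/
import Mathlib

section
/- Suppose additionally that T is ergodic with respect to μ and that p = μ(A) > 0. Then the second moment identity ∫_A R² dμ = 1 + 2 ∫_Ω τ dμ holds as an identity in [0,∞]; equivalently, the second moment of R under the conditional probability measure μ(· | A) equals (1 + 2 E_μ[τ])/p. -/
open MeasureTheory ProbabilityTheory Set
open scoped ENNReal

/-- The first return time `R(f) = inf {z ≥ 1 : f z = true} ∈ ℕ ∪ {∞}`. -/
noncomputable def firstReturn (f : ℤ → Bool) : ℕ∞ :=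
  sInf ((fun n : ℕ => (n : ℕ∞)) '' {n : ℕ | 1 ≤ n ∧ f (n : ℤ) = true})

/-- The first hitting time `τ(f) = inf {z ≥ 0 : f z = true} ∈ ℕ ∪ {∞}`. -/
noncomputable def hittingTime (f : ℤ → Bool) : ℕ∞ :=
  sInf ((fun n : ℕ => (n : ℕ∞)) '' {n : ℕ | f (n : ℤ) = true})

open Filter
open scoped Topology

lemma kac_lt_sInf_iff (S : Set ℕ) (n : ℕ) :
    (n : ℕ∞) < sInf ((fun k : ℕ => (k : ℕ∞)) '' S) ↔ ∀ m ∈ S, n < m := by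
  constructor
  · intro h m hm
    by_contra hc
    push_neg at hc
    have h1 : sInf ((fun k : ℕ => (k : ℕ∞)) '' S) ≤ (m : ℕ∞) :=
      sInf_le ⟨m, hm, rfl⟩
    have h2 : (m : ℕ∞) ≤ (n : ℕ∞) := by exact_mod_cast hc
    exact absurd (h.trans_le (h1.trans h2)) (lt_irrefl _)
  · intro h
    have h1 : ((n + 1 : ℕ) : ℕ∞) ≤ sInf ((fun k : ℕ => (k : ℕ∞)) '' S) := by
      apply le_sInf
      rintro x ⟨m, hm, rfl⟩
      show ((n+1:ℕ):ℕ∞) ≤ (m:ℕ∞)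
      exact_mod_cast Nat.succ_le_of_lt (h m hm)
    exact lt_of_lt_of_le (by exact_mod_cast Nat.lt_succ_self n) h1

lemma kac_lt_firstReturn_iff (f : ℤ → Bool) (n : ℕ) :
    (n : ℕ∞) < firstReturn f ↔ ∀ m : ℕ, 1 ≤ m → m ≤ n → f (m : ℤ) = false := by
  rw [firstReturn, kac_lt_sInf_iff]
  constructor
  · intro h m h1 hm
    by_contra hc
    have ht : f (m : ℤ) = true := by
      cases hfm : f (m : ℤ) with
      | false => exact absurd hfm hc
      | true => rfl
    exact absurd hm (not_le.2 (h m ⟨h1, ht⟩))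
  · rintro h m ⟨h1, ht⟩
    by_contra hc
    push_neg at hc
    rw [h m h1 hc] at ht
    exact Bool.false_ne_true ht

lemma kac_lt_hittingTime_iff (f : ℤ → Bool) (n : ℕ) :
    (n : ℕ∞) < hittingTime f ↔ ∀ m : ℕ, m ≤ n → f (m : ℤ) = false := by
  rw [hittingTime, kac_lt_sInf_iff]
  constructor
  · intro h m hm
    by_contra hc
    have ht : f (m : ℤ) = true := by
      cases hfm : f (m : ℤ) with
      | false => exact absurd hfm hc
      | true => rfl
    exact absurd hm (not_le.2 (h m ht))
  · intro h m ht
    by_contra hc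
    push_neg at hc
    have ht' : f (m:ℤ) = true := ht
    rw [h m hc] at ht'
    exact Bool.false_ne_true ht'

lemma kac_sum_odd (k : ℕ) : ∑ n ∈ Finset.range k, (2 * n + 1) = k ^ 2 := by
  induction k with
  | zero => simp
  | succ k ih => rw [Finset.sum_range_succ, ih]; ring

lemma kac_toENNReal_eq_tsum (x : ℕ∞) :
    (x : ℝ≥0∞) = ∑' n : ℕ, if (n : ℕ∞) < x then 1 else 0 := by
  cases x with
  | top =>
    rw [ENat.toENNReal_top]
    have : ∀ n : ℕ, (if ((n : ℕ∞) < (⊤ : ℕ∞)) then (1 : ℝ≥0∞) else 0) = 1 := fun n =>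
      if_pos (lt_of_le_of_ne le_top (by simp))
    simp only [this]
    exact (ENNReal.tsum_const_eq_top_of_ne_zero one_ne_zero).symm
  | coe k =>
    rw [ENat.toENNReal_coe]
    rw [tsum_eq_sum (s := Finset.range k) (fun n hn => if_neg (by
      simp only [Finset.mem_range, not_lt] at hn
      exact not_lt.2 (by exact_mod_cast hn)))]
    rw [Finset.sum_congr rfl (fun n hn => if_pos (by
      simp only [Finset.mem_range] at hn
      exact_mod_cast hn))]
    simp

lemma kac_toENNReal_sq_eq_tsum (x : ℕ∞) :
    (x : ℝ≥0∞) ^ 2 = ∑' n : ℕ, if (n : ℕ∞) < x then (2 * (n : ℝ≥0∞) + 1) else 0 := by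
  cases x with
  | top =>
    rw [ENat.toENNReal_top]
    refine le_antisymm ?_ le_top
    have h1 : (⊤ : ℝ≥0∞) = ∑' n : ℕ, (1 : ℝ≥0∞) :=
      (ENNReal.tsum_const_eq_top_of_ne_zero one_ne_zero).symm
    calc (⊤ : ℝ≥0∞) ^ 2 ≤ ⊤ := le_top
      _ = ∑' n : ℕ, (1 : ℝ≥0∞) := h1
      _ ≤ _ := Summable.tsum_le_tsum (fun n => by
          rw [if_pos (lt_of_le_of_ne le_top (by simp : (n : ℕ∞) ≠ ⊤))]
          calc (1 : ℝ≥0∞) ≤ 2 * n + 1 := le_add_self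
        ) ENNReal.summable ENNReal.summable
  | coe k =>
    rw [ENat.toENNReal_coe]
    rw [tsum_eq_sum (s := Finset.range k) (fun n hn => if_neg (by
      simp only [Finset.mem_range, not_lt] at hn
      exact not_lt.2 (by exact_mod_cast hn)))]
    rw [Finset.sum_congr rfl (fun n hn => if_pos (by
      simp only [Finset.mem_range] at hn
      exact_mod_cast hn))]
    have := kac_sum_odd k
    have hc : ((∑ n ∈ Finset.range k, (2 * n + 1) : ℕ) : ℝ≥0∞) = ((k ^ 2 : ℕ) : ℝ≥0∞) :=
      congrArg _ this
    push_cast at hc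
    rw [← hc]


/-- positions `0..n-1` are false -/
def kacF (n : ℕ) : Set (ℤ → Bool) := {f | ∀ j : ℕ, j < n → f (j : ℤ) = false}
/-- positions `1..n` are false -/
def kacP (n : ℕ) : Set (ℤ → Bool) := {f | ∀ m : ℕ, 1 ≤ m → m ≤ n → f (m : ℤ) = false}
/-- some position `≥ m` is true -/
def kacV (m : ℕ) : Set (ℤ → Bool) := {f | ∃ n : ℕ, m ≤ n ∧ f (n : ℤ) = true}

lemma kac_coord_ms (z : ℤ) (b : Bool) : MeasurableSet {f : ℤ → Bool | f z = b} := by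
  have : {f : ℤ → Bool | f z = b} = (fun f : ℤ → Bool => f z) ⁻¹' {b} := by
    ext f; simp
  rw [this]
  exact measurable_pi_apply z (measurableSet_singleton b)

lemma kacF_ms (n : ℕ) : MeasurableSet (kacF n) := by
  have : kacF n = ⋂ (j : ℕ) (_ : j < n), {f : ℤ → Bool | f (j : ℤ) = false} := by
    ext f; simp [kacF]
  rw [this]
  exact MeasurableSet.iInter fun j => MeasurableSet.iInter fun _ => kac_coord_ms _ _

lemma kacP_ms (n : ℕ) : MeasurableSet (kacP n) := by
  have : kacP n = ⋂ (m : ℕ) (_ : 1 ≤ m) (_ : m ≤ n), {f : ℤ → Bool | f (m : ℤ) = false} := by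
    ext f; simp [kacP]
  rw [this]
  exact MeasurableSet.iInter fun m => MeasurableSet.iInter fun _ =>
    MeasurableSet.iInter fun _ => kac_coord_ms _ _

lemma kacV_ms (m : ℕ) : MeasurableSet (kacV m) := by
  have : kacV m = ⋃ (n : ℕ) (_ : m ≤ n), {f : ℤ → Bool | f (n : ℤ) = true} := by
    ext f; simp [kacV]
  rw [this]
  exact MeasurableSet.iUnion fun n => MeasurableSet.iUnion fun _ => kac_coord_ms _ _

lemma kacW_ms : MeasurableSet (⋂ m, kacV m) := MeasurableSet.iInter fun m => kacV_ms m

lemma kac_algebra (d b : ℕ → ℝ≥0∞) (hsum : ∀ j, b j = ∑' k, if j ≤ k then d k else 0)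
    (hb0 : b 0 = 1) :
    ∑' n : ℕ, (2 * (n : ℝ≥0∞) + 1) * d n = 1 + 2 * ∑' n : ℕ, b (n + 1) := by
  have h1 : (1 : ℝ≥0∞) = ∑' k, d k := by
    rw [← hb0, hsum 0]
    exact tsum_congr fun k => if_pos (Nat.zero_le k)
  have h2 : ∑' n : ℕ, b (n + 1) = ∑' k : ℕ, (k : ℝ≥0∞) * d k := by
    calc ∑' n : ℕ, b (n + 1) = ∑' n : ℕ, ∑' k : ℕ, if n + 1 ≤ k then d k else 0 :=
        tsum_congr fun n => hsum (n + 1)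
      _ = ∑' k : ℕ, ∑' n : ℕ, if n + 1 ≤ k then d k else 0 := ENNReal.tsum_comm
      _ = ∑' k : ℕ, (k : ℝ≥0∞) * d k := by
        refine tsum_congr fun k => ?_
        rw [tsum_eq_sum (s := Finset.range k) (fun n hn => if_neg (by
          simp only [Finset.mem_range, not_lt] at hn; omega))]
        rw [Finset.sum_congr rfl (fun n hn => if_pos (by
          simp only [Finset.mem_range] at hn; omega))]
        rw [Finset.sum_const, Finset.card_range, nsmul_eq_mul]
  calc ∑' n : ℕ, (2 * (n : ℝ≥0∞) + 1) * d n
      = ∑' n : ℕ, (d n + 2 * ((n : ℝ≥0∞) * d n)) := tsum_congr fun n => by ring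
    _ = (∑' n : ℕ, d n) + ∑' n : ℕ, 2 * ((n : ℝ≥0∞) * d n) := ENNReal.tsum_add
    _ = 1 + 2 * ∑' n : ℕ, (n : ℝ≥0∞) * d n := by rw [← h1, ENNReal.tsum_mul_left]
    _ = 1 + 2 * ∑' n : ℕ, b (n + 1) := by rw [h2]


section Dyn
variable {T : (ℤ → Bool) → (ℤ → Bool)} {μ : Measure (ℤ → Bool)}

lemma kac_P_preimage (hT : ∀ f z, T f z = f (z + 1)) (n : ℕ) : T ⁻¹' kacF n = kacP n := by
  ext f
  simp only [mem_preimage, kacF, kacP, mem_setOf_eq]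
  constructor
  · intro h m h1 hm
    have h2 := h (m - 1) (by omega)
    rw [hT] at h2
    have e : ((m - 1 : ℕ) : ℤ) + 1 = (m : ℤ) := by omega
    rwa [e] at h2
  · intro h j hj
    rw [hT]
    have e : ((j : ℤ) + 1) = ((j + 1 : ℕ) : ℤ) := by omega
    rw [e]
    exact h (j + 1) (by omega) (by omega)

lemma kac_split (n : ℕ) :
    kacP n = ({f : ℤ → Bool | f 0 = true} ∩ kacP n) ∪ kacF (n + 1) := by
  ext f
  simp only [kacP, kacF, mem_union, mem_inter_iff, mem_setOf_eq]
  constructor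
  · intro hf
    cases h0 : f 0 with
    | true => exact Or.inl ⟨rfl, hf⟩
    | false =>
      refine Or.inr fun j hj => ?_
      rcases Nat.eq_zero_or_pos j with h | h
      · subst h; simpa using h0
      · exact hf j h (by omega)
  · rintro (⟨-, h⟩ | h)
    · exact h
    · exact fun m h1 hm => h m (by omega)

lemma kac_disj (n : ℕ) :
    Disjoint ({f : ℤ → Bool | f 0 = true} ∩ kacP n) (kacF (n + 1)) := by
  rw [Set.disjoint_left]
  rintro f ⟨h1, -⟩ h2
  have h3 := h2 0 (by omega)
  simp only [Nat.cast_zero] at h3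
  rw [mem_setOf_eq] at h1
  rw [h1] at h3
  exact Bool.noConfusion h3

lemma kac_rec (hT : ∀ f z, T f z = f (z + 1)) (hinv : MeasurePreserving T μ μ) (n : ℕ) :
    μ (kacF n) = μ ({f : ℤ → Bool | f 0 = true} ∩ kacP n) + μ (kacF (n + 1)) := by
  have h1 : μ (kacP n) = μ (kacF n) := by
    rw [← kac_P_preimage hT n]
    exact hinv.measure_preimage (kacF_ms n).nullMeasurableSet
  calc μ (kacF n) = μ (kacP n) := h1.symm
    _ = μ (({f : ℤ → Bool | f 0 = true} ∩ kacP n) ∪ kacF (n + 1)) := congrArg μ (kac_split n)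
    _ = _ := measure_union (kac_disj n) (kacF_ms (n + 1))

lemma kac_iterate (hT : ∀ f z, T f z = f (z + 1)) (m : ℕ) (f : ℤ → Bool) (z : ℤ) :
    T^[m] f z = f (z + m) := by
  induction m generalizing f z with
  | zero => simp
  | succ m ih =>
    rw [Function.iterate_succ_apply, ih (T f) z, hT]
    congr 1
    push_cast
    ring

lemma kac_V_preimage (hT : ∀ f z, T f z = f (z + 1)) (m : ℕ) :
    T^[m] ⁻¹' kacV 0 = kacV m := by
  ext f
  simp only [mem_preimage, kacV, mem_setOf_eq]
  constructor
  · rintro ⟨n, -, ht⟩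
    rw [kac_iterate hT] at ht
    refine ⟨n + m, by omega, ?_⟩
    have e : ((n : ℤ) + m) = ((n + m : ℕ) : ℤ) := by omega
    rwa [e] at ht
  · rintro ⟨n, hn, ht⟩
    refine ⟨n - m, by omega, ?_⟩
    rw [kac_iterate hT]
    have e : (((n - m : ℕ) : ℤ) + m) = (n : ℤ) := by omega
    rwa [e]

lemma kac_W_inv (hT : ∀ f z, T f z = f (z + 1)) :
    T ⁻¹' (⋂ m, kacV m) = ⋂ m, kacV m := by
  ext f
  simp only [mem_preimage, mem_iInter, kacV, mem_setOf_eq]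
  constructor
  · intro h m
    obtain ⟨n, hn, ht⟩ := h m
    rw [hT] at ht
    refine ⟨n + 1, by omega, ?_⟩
    have e : ((n : ℤ) + 1) = ((n + 1 : ℕ) : ℤ) := by omega
    rwa [e] at ht
  · intro h m
    obtain ⟨n, hn, ht⟩ := h (m + 1)
    refine ⟨n - 1, by omega, ?_⟩
    rw [hT]
    have e : (((n - 1 : ℕ) : ℤ) + 1) = (n : ℤ) := by omega
    rwa [e]

lemma kac_B_eq : (⋂ n, kacF n) = (kacV 0)ᶜ := by
  ext f
  simp only [mem_iInter, kacF, mem_setOf_eq, mem_compl_iff, kacV]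
  constructor
  · rintro h ⟨n, -, ht⟩
    have := h (n + 1) n (by omega)
    rw [ht] at this
    exact Bool.noConfusion this
  · intro h n j hj
    cases hf : f (j : ℤ) with
    | false => rfl
    | true => exact absurd ⟨j, Nat.zero_le j, hf⟩ h

lemma kac_blim [IsProbabilityMeasure μ] (hT : ∀ f z, T f z = f (z + 1))
    (hinv : MeasurePreserving T μ μ) (herg : Ergodic T μ)
    (hp : 0 < μ {f : ℤ → Bool | f 0 = true}) :
    Tendsto (fun n => μ (kacF n)) atTop (𝓝 0) := by
  -- μ of the invariant set W is 0 or 1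
  have hW01 : μ (⋂ m, kacV m) = 0 ∨ μ (⋂ m, kacV m) = 1 :=
    herg.toPreErgodic.prob_eq_zero_or_one kacW_ms (kac_W_inv hT)
  have hVm : ∀ m, μ (kacV m) = μ (kacV 0) := by
    intro m
    rw [← kac_V_preimage hT m]
    exact (hinv.iterate m).measure_preimage (kacV_ms 0).nullMeasurableSet
  have hanti : Antitone kacV := by
    refine antitone_nat_of_succ_le fun m => ?_
    rintro f ⟨n, hn, ht⟩
    exact ⟨n, by omega, ht⟩
  have hWlim : Tendsto (fun m => μ (kacV m)) atTop (𝓝 (μ (⋂ m, kacV m))) :=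
    tendsto_measure_iInter_atTop (fun m => (kacV_ms m).nullMeasurableSet) hanti
      ⟨0, measure_ne_top μ _⟩
  have hWV : μ (⋂ m, kacV m) = μ (kacV 0) := by
    have : Tendsto (fun _ : ℕ => μ (kacV 0)) atTop (𝓝 (μ (⋂ m, kacV m))) := by
      refine hWlim.congr fun m => hVm m
    exact (tendsto_nhds_unique this tendsto_const_nhds)
  have hApos : 0 < μ (kacV 0) := by
    refine lt_of_lt_of_le hp (measure_mono ?_)
    intro f hf
    exact ⟨0, le_refl 0, by simpa using hf⟩
  have hV1 : μ (kacV 0) = 1 := by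
    rcases hW01 with h | h
    · rw [← hWV, h] at hApos; exact absurd hApos (lt_irrefl 0)
    · refine le_antisymm prob_le_one ?_
      rw [← h, hWV]
  have hB : μ (⋂ n, kacF n) = 0 := by
    rw [kac_B_eq, measure_compl (kacV_ms 0) (measure_ne_top μ _), hV1, measure_univ]
    simp
  have := tendsto_measure_iInter_atTop (μ := μ) (fun n => (kacF_ms n).nullMeasurableSet)
    (antitone_nat_of_succ_le fun n f hf j hj => hf j (by omega)) ⟨0, measure_ne_top μ _⟩
  rw [hB] at this
  exact this

lemma kac_hsum [IsProbabilityMeasure μ] (hT : ∀ f z, T f z = f (z + 1))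
    (hinv : MeasurePreserving T μ μ) (herg : Ergodic T μ)
    (hp : 0 < μ {f : ℤ → Bool | f 0 = true}) (j : ℕ) :
    μ (kacF j) = ∑' k : ℕ, if j ≤ k then μ ({f : ℤ → Bool | f 0 = true} ∩ kacP k) else 0 := by
  set d : ℕ → ℝ≥0∞ := fun k => μ ({f : ℤ → Bool | f 0 = true} ∩ kacP k) with hd
  have hpartial : ∀ N : ℕ, μ (kacF j) =
      (∑ k ∈ Finset.range (j + N), if j ≤ k then d k else 0) + μ (kacF (j + N)) := by
    intro N
    induction N with
    | zero =>
      rw [Finset.sum_eq_zero fun k hk => if_neg (by simp only [Finset.mem_range] at hk; omega)]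
      simp
    | succ N ih =>
      rw [show j + (N + 1) = (j + N) + 1 by omega, Finset.sum_range_succ,
        if_pos (by omega : j ≤ j + N)]
      rw [ih, kac_rec hT hinv (j + N)]
      ring
  have hj : Tendsto (fun N : ℕ => j + N) atTop atTop :=
    tendsto_atTop_mono (fun n => Nat.le_add_left n j) tendsto_id
  have h1 : Tendsto (fun N : ℕ => (∑ k ∈ Finset.range (j + N), if j ≤ k then d k else 0)
      + μ (kacF (j + N))) atTop (𝓝 ((∑' k : ℕ, if j ≤ k then d k else 0) + 0)) :=
    Tendsto.add ((ENNReal.tendsto_nat_tsum _).comp hj) ((kac_blim hT hinv herg hp).comp hj)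
  have h2 : Tendsto (fun _ : ℕ => μ (kacF j)) atTop
      (𝓝 ((∑' k : ℕ, if j ≤ k then d k else 0) + 0)) :=
    h1.congr fun N => (hpartial N).symm
  have := tendsto_nhds_unique h2 tendsto_const_nhds
  rw [← this, add_zero]

end Dyn

lemma kac_lint_tau (μ : Measure (ℤ → Bool)) :
    ∫⁻ f, (hittingTime f : ℝ≥0∞) ∂μ = ∑' n : ℕ, μ (kacF (n + 1)) := by
  have hpt : ∀ f, ((hittingTime f : ℝ≥0∞)) =
      ∑' n : ℕ, (kacF (n + 1)).indicator (fun _ => (1 : ℝ≥0∞)) f := by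
    intro f
    rw [kac_toENNReal_eq_tsum]
    refine tsum_congr fun n => ?_
    by_cases h : (n : ℕ∞) < hittingTime f
    · have hmem : f ∈ kacF (n + 1) := fun j hj =>
        (kac_lt_hittingTime_iff f n).mp h j (by omega)
      rw [if_pos h, Set.indicator_of_mem hmem]
    · have hmem : f ∉ kacF (n + 1) := fun hf =>
        h ((kac_lt_hittingTime_iff f n).mpr fun m hm => hf m (by omega))
      rw [if_neg h, Set.indicator_of_notMem hmem]
  calc ∫⁻ f, (hittingTime f : ℝ≥0∞) ∂μ
      = ∫⁻ f, ∑' n : ℕ, (kacF (n + 1)).indicator (fun _ => (1 : ℝ≥0∞)) f ∂μ :=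
        lintegral_congr hpt
    _ = ∑' n : ℕ, ∫⁻ f, (kacF (n + 1)).indicator (fun _ => (1 : ℝ≥0∞)) f ∂μ :=
        lintegral_tsum fun n => (measurable_const.indicator (kacF_ms (n + 1))).aemeasurable
    _ = ∑' n : ℕ, μ (kacF (n + 1)) := tsum_congr fun n => by
        rw [lintegral_indicator_const (kacF_ms (n + 1)), one_mul]

lemma kac_lint_R2 (μ : Measure (ℤ → Bool)) :
    ∫⁻ f in {f : ℤ → Bool | f 0 = true}, (firstReturn f : ℝ≥0∞) ^ 2 ∂μ
      = ∑' n : ℕ, (2 * (n : ℝ≥0∞) + 1) * μ ({f : ℤ → Bool | f 0 = true} ∩ kacP n) := by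
  have hpt : ∀ f, ((firstReturn f : ℝ≥0∞)) ^ 2 =
      ∑' n : ℕ, (kacP n).indicator (fun _ => (2 * (n : ℝ≥0∞) + 1)) f := by
    intro f
    rw [kac_toENNReal_sq_eq_tsum]
    refine tsum_congr fun n => ?_
    by_cases h : (n : ℕ∞) < firstReturn f
    · have hmem : f ∈ kacP n := fun m h1 hm =>
        (kac_lt_firstReturn_iff f n).mp h m h1 hm
      rw [if_pos h, Set.indicator_of_mem hmem]
    · have hmem : f ∉ kacP n := fun hf =>
        h ((kac_lt_firstReturn_iff f n).mpr fun m h1 hm => hf m h1 hm)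
      rw [if_neg h, Set.indicator_of_notMem hmem]
  calc ∫⁻ f in {f : ℤ → Bool | f 0 = true}, (firstReturn f : ℝ≥0∞) ^ 2 ∂μ
      = ∫⁻ f in {f : ℤ → Bool | f 0 = true},
          ∑' n : ℕ, (kacP n).indicator (fun _ => (2 * (n : ℝ≥0∞) + 1)) f ∂μ :=
        lintegral_congr hpt
    _ = ∑' n : ℕ, ∫⁻ f in {f : ℤ → Bool | f 0 = true},
          (kacP n).indicator (fun _ => (2 * (n : ℝ≥0∞) + 1)) f ∂μ :=
        lintegral_tsum fun n => (measurable_const.indicator (kacP_ms n)).aemeasurable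
    _ = ∑' n : ℕ, (2 * (n : ℝ≥0∞) + 1) * μ ({f : ℤ → Bool | f 0 = true} ∩ kacP n) :=
        tsum_congr fun n => by
          rw [lintegral_indicator_const (kacP_ms n), Measure.restrict_apply (kacP_ms n),
            inter_comm]

/-- Second-moment identity for the return time: `∫_A R² dμ = 1 + 2 ∫ τ dμ`;
equivalently, the second moment of `R` under `μ(·|A)` equals `(1 + 2 E_μ[τ])/μ(A)`. -/
theorem kac_second_moment
    (μ : Measure (ℤ → Bool)) [IsProbabilityMeasure μ]
    (T : (ℤ → Bool) → (ℤ → Bool)) (hT : ∀ f z, T f z = f (z + 1))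
    (hinv : MeasurePreserving T μ μ) (herg : Ergodic T μ)
    (A : Set (ℤ → Bool)) (hA : A = {f | f 0 = true})
    (hp : 0 < μ A) :
    (∫⁻ f in A, (firstReturn f : ℝ≥0∞) ^ 2 ∂μ
        = 1 + 2 * ∫⁻ f, (hittingTime f : ℝ≥0∞) ∂μ) ∧
    (∫⁻ f, (firstReturn f : ℝ≥0∞) ^ 2 ∂(ProbabilityTheory.cond μ A)
        = (1 + 2 * ∫⁻ f, (hittingTime f : ℝ≥0∞) ∂μ) / μ A) := by
  subst hA
  have hb0 : μ (kacF 0) = 1 := by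
    have : kacF 0 = univ := by ext f; simp [kacF]
    rw [this, measure_univ]
  have key : ∫⁻ f in {f : ℤ → Bool | f 0 = true}, (firstReturn f : ℝ≥0∞) ^ 2 ∂μ
      = 1 + 2 * ∫⁻ f, (hittingTime f : ℝ≥0∞) ∂μ := by
    rw [kac_lint_R2 μ, kac_lint_tau μ]
    exact kac_algebra (fun k => μ ({f : ℤ → Bool | f 0 = true} ∩ kacP k))
      (fun n => μ (kacF n)) (kac_hsum hT hinv herg hp) hb0
  refine ⟨key, ?_⟩
  have hcond : ProbabilityTheory.cond μ {f : ℤ → Bool | f 0 = true}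
      = (μ {f : ℤ → Bool | f 0 = true})⁻¹ • μ.restrict {f : ℤ → Bool | f 0 = true} := rfl
  rw [hcond, lintegral_smul_measure, key, ENNReal.div_eq_inv_mul, smul_eq_mul]
end

section
/- Let μ be a probability measure on Ω that is invariant and ergodic under the shift T, with finite expected root degree Δ = ∫_Ω deg(0) dμ < ∞ and with p = μ(A) > 0, where A = {E ∈ Ω : 0 is a cut point of E}. For E ∈ A let z₁(E) = inf{z ≥ 1 : z is a cut point of E} and let N(E) = #{(x, y) : 0 ≤ x < y ≤ z₁(E) − 1, E x y = true} denote the number of edges of the subgraph induced by the first block C₁ = {0, …, z₁(E) − 1}. Then ∫_A N dμ ≤ Δ/2; in particular the expectation of N under the conditional measure μ(· | A) is at most Δ/(2p), and hence finite. -/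
open MeasureTheory ProbabilityTheory Set
open scoped ENNReal

/-- Symmetric, irreflexive edge configurations on `ℤ`: the canonical space of graphs on `ℤ`. -/
def GraphCfg : Type :=
  {E : ℤ → ℤ → Bool // (∀ x y, E x y = E y x) ∧ ∀ x, E x x = false}

instance : MeasurableSpace GraphCfg :=
  inferInstanceAs (MeasurableSpace {E : ℤ → ℤ → Bool // (∀ x y, E x y = E y x) ∧ ∀ x, E x x = false})

/-- The shift `(T E) x y = E (x+1) (y+1)`. -/
def graphShift (E : GraphCfg) : GraphCfg :=
  ⟨fun x y => E.1 (x + 1) (y + 1),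
    fun x y => E.2.1 (x + 1) (y + 1),
    fun x => E.2.2 (x + 1)⟩

/-- The degree of a vertex `z`, an element of `ℕ ∪ {∞}`. -/
noncomputable def deg (z : ℤ) (E : GraphCfg) : ℕ∞ :=
  {y : ℤ | E.1 z y = true}.encard

/-- `z` is a cut point of `E`: the edge `{z-1, z}` is present and it is the only edge
`{x, y}` with `x ≤ z-1 ≤ z ≤ y`. -/
def IsCutPt (z : ℤ) (E : GraphCfg) : Prop :=
  E.1 (z - 1) z = true ∧
    ∀ x y : ℤ, x ≤ z - 1 → z ≤ y → (x, y) ≠ (z - 1, z) → E.1 x y = false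

/-- The next cut point `z₁(E) = inf {z ≥ 1 : z is a cut point} ∈ ℕ ∪ {∞}`. -/
noncomputable def nextCut (E : GraphCfg) : ℕ∞ :=
  sInf ((fun n : ℕ => (n : ℕ∞)) '' {n : ℕ | 1 ≤ n ∧ IsCutPt (n : ℤ) E})

/-- The number of edges of the subgraph induced by the first block
`C₁ = {0, …, z₁(E) − 1}`: pairs `0 ≤ x < y ≤ z₁(E) − 1` (i.e. `y < z₁(E)`) carrying
an edge. -/
noncomputable def blockEdges (E : GraphCfg) : ℕ∞ :=
  {p : ℤ × ℤ | 0 ≤ p.1 ∧ p.1 < p.2 ∧ (p.2.toNat : ℕ∞) < nextCut E ∧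
    E.1 p.1 p.2 = true}.encard


namespace BlockAux


lemma measurable_edge (x y : ℤ) : Measurable fun E : GraphCfg => E.1 x y := by
  have h : Measurable (Subtype.val : GraphCfg → (ℤ → ℤ → Bool)) := measurable_subtype_coe
  exact (measurable_pi_apply y).comp ((measurable_pi_apply x).comp h)

lemma measurableSet_cut (z : ℤ) : MeasurableSet {E : GraphCfg | IsCutPt z E} := by
  have : {E : GraphCfg | IsCutPt z E} =
      {E : GraphCfg | E.1 (z-1) z = true} ∩
        ⋂ (x : ℤ) (y : ℤ), {E : GraphCfg | x ≤ z - 1 → z ≤ y → (x, y) ≠ (z - 1, z) → E.1 x y = false} := by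
    ext E
    simp only [IsCutPt, Set.mem_setOf_eq, Set.mem_inter_iff, Set.mem_iInter]
  rw [this]
  refine MeasurableSet.inter ((measurable_edge (z-1) z) (measurableSet_singleton true)) ?_
  refine MeasurableSet.iInter fun x => MeasurableSet.iInter fun y => ?_
  by_cases h : x ≤ z - 1 ∧ z ≤ y ∧ (x, y) ≠ (z - 1, z)
  · have : {E : GraphCfg | x ≤ z - 1 → z ≤ y → (x, y) ≠ (z - 1, z) → E.1 x y = false}
        = {E : GraphCfg | E.1 x y = false} := by
      ext E; simp [h.1, h.2.1, h.2.2]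
    rw [this]
    exact (measurable_edge x y) (measurableSet_singleton false)
  · have : {E : GraphCfg | x ≤ z - 1 → z ≤ y → (x, y) ≠ (z - 1, z) → E.1 x y = false}
        = Set.univ := by
      ext E; simp only [Set.mem_setOf_eq, Set.mem_univ, iff_true]
      intro h1 h2 h3; exact absurd ⟨h1, h2, h3⟩ h
    rw [this]; exact MeasurableSet.univ

lemma shift_iter (k : ℕ) (E : GraphCfg) (x y : ℤ) :
    ((graphShift^[k]) E).1 x y = E.1 (x + k) (y + k) := by
  induction k generalizing E with
  | zero => simp
  | succ n ih =>
    rw [Function.iterate_succ_apply, ih]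
    show E.1 (x + n + 1) (y + n + 1) = E.1 (x + (n+1)) (y + (n+1))
    congr 1 <;> push_cast <;> ring



def graphUnshift (E : GraphCfg) : GraphCfg :=
  ⟨fun x y => E.1 (x - 1) (y - 1),
    fun x y => E.2.1 (x - 1) (y - 1),
    fun x => E.2.2 (x - 1)⟩

lemma left_inv_shift : Function.LeftInverse graphUnshift graphShift := by
  intro E; apply Subtype.ext; funext x y
  show E.1 (x - 1 + 1) (y - 1 + 1) = E.1 x y
  congr 1 <;> ring

lemma right_inv_shift : Function.RightInverse graphUnshift graphShift := by
  intro E; apply Subtype.ext; funext x y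
  show E.1 (x + 1 - 1) (y + 1 - 1) = E.1 x y
  congr 1 <;> ring

lemma measurable_shift : Measurable graphShift := by
  apply Measurable.subtype_mk
  exact measurable_pi_lambda _ fun x => measurable_pi_lambda _ fun y =>
    measurable_edge (x+1) (y+1)

lemma measurable_unshift : Measurable graphUnshift := by
  apply Measurable.subtype_mk
  exact measurable_pi_lambda _ fun x => measurable_pi_lambda _ fun y =>
    measurable_edge (x-1) (y-1)

noncomputable def shiftIterEquiv (k : ℕ) : GraphCfg ≃ᵐ GraphCfg where
  toFun := graphShift^[k]
  invFun := graphUnshift^[k]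
  left_inv := left_inv_shift.iterate k
  right_inv := right_inv_shift.iterate k
  measurable_toFun := measurable_shift.iterate k
  measurable_invFun := measurable_unshift.iterate k

lemma isCutPt_iter (k : ℕ) (z : ℤ) (E : GraphCfg) :
    IsCutPt z ((graphShift^[k]) E) ↔ IsCutPt (z + k) E := by
  constructor
  · rintro ⟨h1, h2⟩
    constructor
    · rw [shift_iter] at h1
      have : z + (k:ℤ) - 1 = z - 1 + k := by ring
      rw [this]; exact h1
    · intro x y hx hy hne
      have := h2 (x - k) (y - k) (by omega) (by omega) ?_
      · rw [shift_iter] at this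
        have e1 : x - (k:ℤ) + k = x := by ring
        have e2 : y - (k:ℤ) + k = y := by ring
        rw [e1, e2] at this; exact this
      · intro hcon
        apply hne
        have hx' : x - (k:ℤ) = z - 1 := congrArg Prod.fst hcon
        have hy' : y - (k:ℤ) = z := congrArg Prod.snd hcon
        have : x = z + k - 1 := by omega
        have : y = z + k := by omega
        simp [Prod.ext_iff]; omega
  · rintro ⟨h1, h2⟩
    constructor
    · rw [shift_iter]
      have : z - 1 + (k:ℤ) = z + k - 1 := by ring
      rw [this]; exact h1
    · intro x y hx hy hne
      rw [shift_iter]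
      apply h2 (x + k) (y + k) (by omega) (by omega)
      intro hcon
      apply hne
      have hx' : x + (k:ℤ) = z + k - 1 := congrArg Prod.fst hcon
      have hy' : y + (k:ℤ) = z + k := congrArg Prod.snd hcon
      simp [Prod.ext_iff]; omega

lemma isCutPt_unshift (k : ℕ) (z : ℤ) (E : GraphCfg) :
    IsCutPt (z + k) ((graphUnshift^[k]) E) ↔ IsCutPt z E := by
  rw [← isCutPt_iter k z ((graphUnshift^[k]) E), (right_inv_shift.iterate k) E]

lemma deg_iter (k : ℕ) (E : GraphCfg) : deg 0 ((graphShift^[k]) E) = deg (k : ℤ) E := by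
  unfold deg
  rw [← Function.Injective.encard_image (add_left_injective (k:ℤ))
    {y : ℤ | ((graphShift^[k]) E).1 0 y = true}]
  congr 1
  ext w
  simp only [Set.mem_image, Set.mem_setOf_eq, shift_iter, zero_add]
  constructor
  · rintro ⟨y, h1, h2⟩; rw [← h2]; exact h1
  · intro h; exact ⟨w - k, by simpa using h, by ring⟩

lemma lt_nextCut (k : ℕ) (E : GraphCfg) :
    (k : ℕ∞) < nextCut E ↔ ∀ n : ℕ, 1 ≤ n → n ≤ k → ¬ IsCutPt (n : ℤ) E := by
  constructor
  · intro h n h1 h2 hc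
    have hmem : (n : ℕ∞) ∈ (fun n : ℕ => (n : ℕ∞)) '' {n : ℕ | 1 ≤ n ∧ IsCutPt (n : ℤ) E} :=
      ⟨n, ⟨h1, hc⟩, rfl⟩
    have := sInf_le hmem
    have : (k : ℕ∞) < (n : ℕ∞) := lt_of_lt_of_le h this
    exact absurd (Nat.cast_le.2 h2) (not_le.2 this)
  · intro h
    have hk1 : ((k+1 : ℕ) : ℕ∞) ≤ nextCut E := by
      apply le_sInf
      rintro b ⟨n, ⟨h1, hc⟩, rfl⟩
      have : k + 1 ≤ n := by
        by_contra hcon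
        exact h n h1 (by omega) hc
      show ((k+1:ℕ) : ℕ∞) ≤ ((n:ℕ) : ℕ∞)
      exact_mod_cast this
    calc (k : ℕ∞) < ((k+1 : ℕ) : ℕ∞) := by exact_mod_cast Nat.lt_succ_self k
    _ ≤ nextCut E := hk1

def Qset (k : ℕ) : Set GraphCfg := {E | (k : ℕ∞) < nextCut E}

lemma measurableSet_Qset (k : ℕ) : MeasurableSet (Qset k) := by
  have : Qset k = ⋂ n : ℕ, {E : GraphCfg | 1 ≤ n → n ≤ k → ¬ IsCutPt (n : ℤ) E} := by
    ext E
    simp only [Qset, Set.mem_setOf_eq, Set.mem_iInter, lt_nextCut]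
  rw [this]
  refine MeasurableSet.iInter fun n => ?_
  by_cases h : 1 ≤ n ∧ n ≤ k
  · have : {E : GraphCfg | 1 ≤ n → n ≤ k → ¬ IsCutPt (n : ℤ) E}
        = {E : GraphCfg | IsCutPt (n:ℤ) E}ᶜ := by
      ext E; simp [h.1, h.2]
    rw [this]; exact (measurableSet_cut _).compl
  · have : {E : GraphCfg | 1 ≤ n → n ≤ k → ¬ IsCutPt (n : ℤ) E} = Set.univ := by
      ext E; simp only [Set.mem_setOf_eq, Set.mem_univ, iff_true]
      intro h1 h2; exact absurd ⟨h1, h2⟩ h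
    rw [this]; exact MeasurableSet.univ



lemma encard_eq_tsum {α : Type*} (S : Set α) :
    (S.encard : ℝ≥0∞) = ∑' a : α, S.indicator (fun _ => (1:ℝ≥0∞)) a := by
  rw [← ENNReal.tsum_set_one]
  exact tsum_subtype S fun _ => 1

lemma deg_eq_tsum (z : ℤ) (E : GraphCfg) :
    ((deg z E : ℕ∞) : ℝ≥0∞) = ∑' y : ℤ, (if E.1 z y = true then (1:ℝ≥0∞) else 0) := by
  rw [deg, encard_eq_tsum]
  exact tsum_congr fun y => by simp [Set.indicator_apply]

lemma measurable_degE (z : ℤ) : Measurable fun E : GraphCfg => ((deg z E : ℕ∞) : ℝ≥0∞) := by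
  simp_rw [deg_eq_tsum]
  exact Measurable.ennreal_tsum fun y =>
    Measurable.ite ((measurable_edge z y) (measurableSet_singleton true))
      measurable_const measurable_const

lemma two_mul_blockEdges_le (E : GraphCfg) :
    2 * blockEdges E ≤ {q : ℕ × ℤ | (q.1 : ℕ∞) < nextCut E ∧ E.1 q.1 q.2 = true}.encard := by
  set S : Set (ℤ × ℤ) := {p : ℤ × ℤ | 0 ≤ p.1 ∧ p.1 < p.2 ∧ (p.2.toNat : ℕ∞) < nextCut E ∧
    E.1 p.1 p.2 = true} with hS
  set W : Set (ℕ × ℤ) := {q : ℕ × ℤ | (q.1 : ℕ∞) < nextCut E ∧ E.1 q.1 q.2 = true} with hW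
  have hg1 : Set.InjOn (fun p : ℤ × ℤ => (p.1.toNat, p.2)) S := by
    rintro ⟨a, b⟩ ha ⟨c, d⟩ hc h
    obtain ⟨ha0, -, -, -⟩ := ha; obtain ⟨hc0, -, -, -⟩ := hc
    simp only [Prod.mk.injEq] at h ⊢
    omega
  have hg2 : Set.InjOn (fun p : ℤ × ℤ => (p.2.toNat, p.1)) S := by
    rintro ⟨a, b⟩ ha ⟨c, d⟩ hc h
    obtain ⟨ha0, halt, -, -⟩ := ha; obtain ⟨hc0, hclt, -, -⟩ := hc
    simp only [Prod.mk.injEq] at h ⊢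
    omega
  have hsub1 : (fun p : ℤ × ℤ => (p.1.toNat, p.2)) '' S ⊆ W := by
    rintro q ⟨p, hp, rfl⟩
    obtain ⟨hp0, hplt, hpcut, hpe⟩ := hp
    refine ⟨lt_of_le_of_lt (Nat.cast_le.2 (by omega : p.1.toNat ≤ p.2.toNat)) hpcut, ?_⟩
    show E.1 (p.1.toNat : ℤ) p.2 = true
    rwa [Int.toNat_of_nonneg hp0]
  have hsub2 : (fun p : ℤ × ℤ => (p.2.toNat, p.1)) '' S ⊆ W := by
    rintro q ⟨p, hp, rfl⟩
    obtain ⟨hp0, hplt, hpcut, hpe⟩ := hp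
    refine ⟨hpcut, ?_⟩
    show E.1 (p.2.toNat : ℤ) p.1 = true
    rw [Int.toNat_of_nonneg (by omega), E.2.1]
    exact hpe
  have hdisj : Disjoint ((fun p : ℤ × ℤ => (p.1.toNat, p.2)) '' S)
      ((fun p : ℤ × ℤ => (p.2.toNat, p.1)) '' S) := by
    rw [Set.disjoint_left]
    rintro q ⟨p, hp, rfl⟩ ⟨r, hr, h⟩
    obtain ⟨hp0, hplt, -, -⟩ := hp; obtain ⟨hr0, hrlt, -, -⟩ := hr
    have h1 : r.2.toNat = p.1.toNat := congrArg Prod.fst h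
    have h2 : r.1 = p.2 := congrArg Prod.snd h
    omega
  have hBE : blockEdges E = S.encard := rfl
  calc 2 * blockEdges E = S.encard + S.encard := by rw [hBE, two_mul]
  _ = ((fun p : ℤ × ℤ => (p.1.toNat, p.2)) '' S).encard
      + ((fun p : ℤ × ℤ => (p.2.toNat, p.1)) '' S).encard := by
      rw [hg1.encard_image, hg2.encard_image]
  _ = (((fun p : ℤ × ℤ => (p.1.toNat, p.2)) '' S)
      ∪ ((fun p : ℤ × ℤ => (p.2.toNat, p.1)) '' S)).encard := (Set.encard_union_eq hdisj).symm
  _ ≤ W.encard := Set.encard_le_encard (Set.union_subset hsub1 hsub2)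

lemma encard_W_eq (E : GraphCfg) :
    (({q : ℕ × ℤ | (q.1 : ℕ∞) < nextCut E ∧ E.1 q.1 q.2 = true}.encard : ℕ∞) : ℝ≥0∞)
      = ∑' k : ℕ, (Qset k).indicator (fun E' => ((deg (k : ℤ) E' : ℕ∞) : ℝ≥0∞)) E := by
  set W : Set (ℕ × ℤ) := {q : ℕ × ℤ | (q.1 : ℕ∞) < nextCut E ∧ E.1 q.1 q.2 = true} with hW
  calc ((W.encard : ℕ∞) : ℝ≥0∞) = ∑' q : ℕ × ℤ, W.indicator (fun _ => (1:ℝ≥0∞)) q :=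
        encard_eq_tsum W
  _ = ∑' (k : ℕ) (y : ℤ), W.indicator (fun _ => (1:ℝ≥0∞)) (k, y) := ENNReal.tsum_prod'
  _ = ∑' k : ℕ, (Qset k).indicator (fun E' => ((deg (k : ℤ) E' : ℕ∞) : ℝ≥0∞)) E := by
      refine tsum_congr fun k => ?_
      by_cases hk : (k : ℕ∞) < nextCut E
      · rw [Set.indicator_of_mem (show E ∈ Qset k from hk), deg_eq_tsum]
        refine tsum_congr fun y => ?_
        simp [Set.indicator_apply, hW, hk]
      · rw [Set.indicator_of_notMem (show E ∉ Qset k from hk)]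
        refine ENNReal.tsum_eq_zero.2 fun y => ?_
        simp [Set.indicator_apply, hW, hk]

def Dset (k : ℕ) : Set GraphCfg := (graphUnshift^[k]) ⁻¹' ({E | IsCutPt 0 E} ∩ Qset k)

lemma measurableSet_Dset (k : ℕ) : MeasurableSet (Dset k) :=
  (measurable_unshift.iterate k) ((measurableSet_cut 0).inter (measurableSet_Qset k))

lemma cut_of_mem_Dset {k : ℕ} {E : GraphCfg} (h : E ∈ Dset k) : IsCutPt (-(k : ℤ)) E := by
  have h0 : IsCutPt 0 ((graphUnshift^[k]) E) := h.1
  have he : -(k : ℤ) + k = 0 := by ring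
  exact (isCutPt_unshift k _ E).1 (by rw [he]; exact h0)

lemma not_cut_of_mem_Dset {k : ℕ} {E : GraphCfg} (h : E ∈ Dset k) (n : ℕ)
    (h1 : 1 ≤ n) (h2 : n ≤ k) : ¬ IsCutPt ((n : ℤ) - k) E := by
  have hq : (k : ℕ∞) < nextCut ((graphUnshift^[k]) E) := h.2
  intro hc
  refine (lt_nextCut k _).1 hq n h1 h2 ?_
  have := (isCutPt_unshift k ((n : ℤ) - k) E).2 hc
  have he : (n : ℤ) - k + k = (n : ℤ) := by ring
  rwa [he] at this

lemma disjoint_Dset : Pairwise (Function.onFun Disjoint Dset) := by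
  have key : ∀ i j : ℕ, i < j → Disjoint (Dset i) (Dset j) := by
    intro i j hlt
    rw [Set.disjoint_left]
    intro E hi hj
    have h1 : IsCutPt (-(i : ℤ)) E := cut_of_mem_Dset hi
    have h2 := not_cut_of_mem_Dset hj (j - i) (by omega) (by omega)
    apply h2
    have he : ((j - i : ℕ) : ℤ) - j = -(i : ℤ) := by omega
    rw [he]; exact h1
  intro i j hij
  rcases lt_or_gt_of_ne hij with h | h
  · exact key i j h
  · exact (key j i h).symm

lemma setLIntegral_block (μ : Measure GraphCfg) (hinv : MeasurePreserving graphShift μ μ) (k : ℕ) :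
    ∫⁻ E in {E | IsCutPt 0 E}, (Qset k).indicator (fun E' => ((deg (k : ℤ) E' : ℕ∞) : ℝ≥0∞)) E ∂μ
      = ∫⁻ E in Dset k, ((deg 0 E : ℕ∞) : ℝ≥0∞) ∂μ := by
  rw [← lintegral_indicator (measurableSet_cut 0) _, ← lintegral_indicator (measurableSet_Dset k) _]
  have hfun : ∀ E : GraphCfg,
      Set.indicator {E : GraphCfg | IsCutPt 0 E}
        ((Qset k).indicator (fun E' => ((deg (k : ℤ) E' : ℕ∞) : ℝ≥0∞))) E
      = Set.indicator (Dset k) (fun E' => ((deg 0 E' : ℕ∞) : ℝ≥0∞)) ((graphShift^[k]) E) := by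
    intro E
    rw [Set.indicator_indicator]
    by_cases hE : E ∈ {E : GraphCfg | IsCutPt 0 E} ∩ Qset k
    · rw [Set.indicator_of_mem hE]
      have hmem : (graphShift^[k]) E ∈ Dset k := by
        have he : (graphUnshift^[k]) ((graphShift^[k]) E) = E := left_inv_shift.iterate k E
        simp only [Dset, Set.mem_preimage, he]
        exact hE
      rw [Set.indicator_of_mem hmem, deg_iter]
    · rw [Set.indicator_of_notMem hE]
      have hmem : (graphShift^[k]) E ∉ Dset k := by
        intro hc
        apply hE
        have he : (graphUnshift^[k]) ((graphShift^[k]) E) = E := left_inv_shift.iterate k E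
        simp only [Dset, Set.mem_preimage, he] at hc; exact hc
      rw [Set.indicator_of_notMem hmem]
  calc ∫⁻ E, Set.indicator {E : GraphCfg | IsCutPt 0 E}
        ((Qset k).indicator (fun E' => ((deg (k : ℤ) E' : ℕ∞) : ℝ≥0∞))) E ∂μ
      = ∫⁻ E, Set.indicator (Dset k) (fun E' => ((deg 0 E' : ℕ∞) : ℝ≥0∞)) ((graphShift^[k]) E) ∂μ :=
        lintegral_congr hfun
  _ = ∫⁻ E, Set.indicator (Dset k) (fun E' => ((deg 0 E' : ℕ∞) : ℝ≥0∞)) E ∂μ :=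
        (hinv.iterate k).lintegral_comp_emb (shiftIterEquiv k).measurableEmbedding _


end BlockAux

open BlockAux

/-- The expected number of edges in the first block: `∫_A N dμ ≤ Δ/2`, so the mean of `N`
under `μ(·|A)` is at most `Δ/(2 μ(A))`, hence finite. -/
theorem block_edges_expectation
    (μ : Measure GraphCfg) [IsProbabilityMeasure μ]
    (hinv : MeasurePreserving graphShift μ μ) (herg : Ergodic graphShift μ)
    (hΔ : ∫⁻ E, (deg 0 E : ℝ≥0∞) ∂μ ≠ ⊤)
    (A : Set GraphCfg) (hA : A = {E | IsCutPt 0 E})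
    (hp : 0 < μ A) :
    (∫⁻ E in A, (blockEdges E : ℝ≥0∞) ∂μ ≤ (∫⁻ E, (deg 0 E : ℝ≥0∞) ∂μ) / 2) ∧
    (∫⁻ E, (blockEdges E : ℝ≥0∞) ∂(ProbabilityTheory.cond μ A)
        ≤ (∫⁻ E, (deg 0 E : ℝ≥0∞) ∂μ) / (2 * μ A)) ∧
    (∫⁻ E, (blockEdges E : ℝ≥0∞) ∂(ProbabilityTheory.cond μ A) ≠ ⊤) := by
  have key : 2 * ∫⁻ E in A, (blockEdges E : ℝ≥0∞) ∂μ ≤ ∫⁻ E, (deg 0 E : ℝ≥0∞) ∂μ := by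
    rw [← lintegral_const_mul' 2 _ (by norm_num : (2:ℝ≥0∞) ≠ ⊤)]
    calc ∫⁻ E in A, 2 * (blockEdges E : ℝ≥0∞) ∂μ
        ≤ ∫⁻ E in A, ∑' k : ℕ, (Qset k).indicator
            (fun E' => ((deg (k : ℤ) E' : ℕ∞) : ℝ≥0∞)) E ∂μ := by
          refine lintegral_mono fun E => ?_
          calc 2 * (blockEdges E : ℝ≥0∞) = ((2 * blockEdges E : ℕ∞) : ℝ≥0∞) := by
                rw [ENat.toENNReal_mul, ENat.toENNReal_ofNat]
          _ ≤ (({q : ℕ × ℤ | (q.1 : ℕ∞) < nextCut E ∧ E.1 q.1 q.2 = true}.encard : ℕ∞) : ℝ≥0∞) :=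
                ENat.toENNReal_le.2 (two_mul_blockEdges_le E)
          _ = _ := encard_W_eq E
    _ = ∑' k : ℕ, ∫⁻ E in A, (Qset k).indicator
            (fun E' => ((deg (k : ℤ) E' : ℕ∞) : ℝ≥0∞)) E ∂μ :=
          lintegral_tsum fun k =>
            (((measurable_degE (k : ℤ)).indicator (measurableSet_Qset k))).aemeasurable
    _ = ∑' k : ℕ, ∫⁻ E in Dset k, ((deg 0 E : ℕ∞) : ℝ≥0∞) ∂μ := by
          refine tsum_congr fun k => ?_
          rw [hA]
          exact setLIntegral_block μ hinv k
    _ = ∫⁻ E in ⋃ k, Dset k, ((deg 0 E : ℕ∞) : ℝ≥0∞) ∂μ :=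
          (lintegral_iUnion measurableSet_Dset disjoint_Dset _).symm
    _ ≤ ∫⁻ E, (deg 0 E : ℝ≥0∞) ∂μ := setLIntegral_le_lintegral _ _
  have h1 : ∫⁻ E in A, (blockEdges E : ℝ≥0∞) ∂μ ≤ (∫⁻ E, (deg 0 E : ℝ≥0∞) ∂μ) / 2 := by
    rw [ENNReal.le_div_iff_mul_le (Or.inl (by norm_num)) (Or.inl (by norm_num)), mul_comm]
    exact key
  have hcond : ∫⁻ E, (blockEdges E : ℝ≥0∞) ∂(ProbabilityTheory.cond μ A)
      = (μ A)⁻¹ * ∫⁻ E in A, (blockEdges E : ℝ≥0∞) ∂μ := by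
    rw [ProbabilityTheory.cond, lintegral_smul_measure, smul_eq_mul]
  have harith : (μ A)⁻¹ * ((∫⁻ E, (deg 0 E : ℝ≥0∞) ∂μ) / 2)
      = (∫⁻ E, (deg 0 E : ℝ≥0∞) ∂μ) / (2 * μ A) := by
    rw [div_eq_mul_inv, div_eq_mul_inv,
      ENNReal.mul_inv (Or.inl (by norm_num : (2:ℝ≥0∞) ≠ 0)) (Or.inl (by norm_num : (2:ℝ≥0∞) ≠ ⊤))]
    ring
  have h2 : ∫⁻ E, (blockEdges E : ℝ≥0∞) ∂(ProbabilityTheory.cond μ A)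
      ≤ (∫⁻ E, (deg 0 E : ℝ≥0∞) ∂μ) / (2 * μ A) := by
    rw [hcond, ← harith]
    exact mul_le_mul_right h1 _
  refine ⟨h1, h2, ?_⟩
  have hfin : (∫⁻ E, (deg 0 E : ℝ≥0∞) ∂μ) / (2 * μ A) < ⊤ :=
    ENNReal.div_lt_top hΔ (mul_ne_zero (by norm_num) (ne_of_gt hp))
  exact (lt_of_le_of_lt h2 hfin).ne
end

section
/- Let μ be a probability measure on Ω that is invariant and ergodic under the shift T, and suppose μ({E : deg(z)(E) < ∞ for every z ∈ ℤ}) = 1 (μ-almost sure local finiteness). Then the event that infinitely many edges lie above the link {−1, 0} has trivial probability: μ({E : e(0)(E) = ∞}) ∈ {0, 1}. -/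
open MeasureTheory ProbabilityTheory Set
open scoped ENNReal

/-- The number of edges above the link `{z−1, z}`, an element of `ℕ ∪ {∞}`. -/
noncomputable def edgesAbove (z : ℤ) (E : GraphCfg) : ℕ∞ :=
  {p : ℤ × ℤ | p.1 ≤ z - 1 ∧ z ≤ p.2 ∧ E.1 p.1 p.2 = true}.encard

lemma measurable_coord (x y : ℤ) : Measurable fun E : GraphCfg => E.1 x y :=
  ((measurable_pi_apply y).comp ((measurable_pi_apply x).comp measurable_subtype_coe))

lemma edgesAbove_eq_top_iff (z : ℤ) (E : GraphCfg) :
    edgesAbove z E = ⊤ ↔ {p : ℤ × ℤ | p.1 ≤ z - 1 ∧ z ≤ p.2 ∧ E.1 p.1 p.2 = true}.Infinite :=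
  Set.encard_eq_top_iff

lemma measurableSet_edgesAbove_top (z : ℤ) :
    MeasurableSet {E : GraphCfg | edgesAbove z E = ⊤} := by
  have hrw : {E : GraphCfg | edgesAbove z E = ⊤} =
      ⋂ F : Finset (ℤ × ℤ), ⋃ p ∈ ({p : ℤ × ℤ | p.1 ≤ z - 1 ∧ z ≤ p.2} \ ↑F),
        {E : GraphCfg | E.1 p.1 p.2 = true} := by
    ext E
    simp only [mem_setOf_eq, mem_iInter, mem_iUnion, edgesAbove_eq_top_iff, mem_diff,
      mem_setOf_eq, Finset.mem_coe, exists_prop]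
    constructor
    · intro hinf F
      obtain ⟨p, hp⟩ := (hinf.diff F.finite_toSet).nonempty
      exact ⟨p, ⟨⟨hp.1.1, hp.1.2.1⟩, hp.2⟩, hp.1.2.2⟩
    · intro h
      by_contra hfin
      rw [Set.not_infinite] at hfin
      obtain ⟨p, ⟨hp1, hp2⟩, hp3⟩ := h hfin.toFinset
      exact hp2 (by simp [Set.Finite.mem_toFinset, mem_setOf_eq]; exact ⟨by have := hp1.1; omega, hp1.2, hp3⟩)
  rw [hrw]
  refine MeasurableSet.iInter fun F => MeasurableSet.biUnion (Set.to_countable _) fun p _ =>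
    measurable_coord p.1 p.2 (measurableSet_singleton true)

lemma key_iff (E : GraphCfg) (h0 : deg 0 E ≠ ⊤) :
    edgesAbove 0 (graphShift E) = ⊤ ↔ edgesAbove 0 E = ⊤ := by
  have hd : {y : ℤ | E.1 0 y = true}.Finite := by
    rw [← Set.not_infinite, ← Set.encard_eq_top_iff]; exact h0
  set S0 : Set (ℤ × ℤ) := {p : ℤ × ℤ | p.1 ≤ 0 - 1 ∧ 0 ≤ p.2 ∧ E.1 p.1 p.2 = true} with hS0
  set S1 : Set (ℤ × ℤ) := {p : ℤ × ℤ | p.1 ≤ 0 ∧ 1 ≤ p.2 ∧ E.1 p.1 p.2 = true} with hS1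
  -- shift set is an injective image of S1
  have himg : {p : ℤ × ℤ | p.1 ≤ 0 - 1 ∧ 0 ≤ p.2 ∧ (graphShift E).1 p.1 p.2 = true} =
      (fun q : ℤ × ℤ => (q.1 - 1, q.2 - 1)) '' S1 := by
    ext ⟨a, b⟩
    simp only [mem_setOf_eq, mem_image, graphShift, Prod.mk.injEq, Prod.exists, hS1,
      mem_setOf_eq]
    constructor
    · rintro ⟨h1, h2, h3⟩
      exact ⟨a + 1, b + 1, ⟨by omega, by omega, h3⟩, by omega, by omega⟩
    · rintro ⟨x, y, ⟨h1, h2, h3⟩, rfl, rfl⟩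
      refine ⟨by omega, by omega, ?_⟩
      simpa using h3
  have hinj : Function.Injective (fun q : ℤ × ℤ => (q.1 - 1, q.2 - 1)) := by
    intro p q h
    simp only [Prod.mk.injEq] at h
    exact Prod.ext (by omega) (by omega)
  have hshift : edgesAbove 0 (graphShift E) = S1.encard := by
    rw [edgesAbove, himg, hinj.encard_image S1]
  rw [hshift, edgesAbove, Set.encard_eq_top_iff, Set.encard_eq_top_iff, ← hS0]
  -- now: S1 infinite ↔ S0 infinite, given deg 0 finite
  have hd' : {x : ℤ | E.1 x 0 = true}.Finite := by
    have : {x : ℤ | E.1 x 0 = true} = {x : ℤ | E.1 0 x = true} := by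
      ext x; simp [E.2.1 x 0]
    rw [this]; exact hd
  have hsub1 : S1 ⊆ S0 ∪ (fun y => ((0 : ℤ), y)) '' {y : ℤ | E.1 0 y = true} := by
    rintro ⟨a, b⟩ ⟨h1, h2, h3⟩
    by_cases ha : a ≤ 0 - 1
    · exact Or.inl ⟨ha, by omega, h3⟩
    · have : a = 0 := by omega
      subst this
      exact Or.inr ⟨b, h3, rfl⟩
  have hsub0 : S0 ⊆ S1 ∪ (fun x => (x, (0 : ℤ))) '' {x : ℤ | E.1 x 0 = true} := by
    rintro ⟨a, b⟩ ⟨h1, h2, h3⟩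
    by_cases hb : 1 ≤ b
    · exact Or.inl ⟨by omega, hb, h3⟩
    · have : b = 0 := by omega
      subst this
      exact Or.inr ⟨a, h3, rfl⟩
  constructor
  · intro h1
    by_contra h0fin
    rw [Set.not_infinite] at h0fin
    exact h1 ((h0fin.union (hd.image _)).subset hsub1)
  · intro h0
    by_contra h1fin
    rw [Set.not_infinite] at h1fin
    exact h0 ((h1fin.union (hd'.image _)).subset hsub0)

/-- Zero-one law: for an invariant, ergodic, a.s. locally finite random graph on `ℤ`,
the event that infinitely many edges lie above the link `{−1, 0}` has probability
`0` or `1`. -/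
theorem edgesAbove_zero_one_law
    (μ : Measure GraphCfg) [IsProbabilityMeasure μ]
    (hinv : MeasurePreserving graphShift μ μ) (herg : Ergodic graphShift μ)
    (hloc : ∀ᵐ E ∂μ, ∀ z : ℤ, deg z E ≠ ⊤) :
    μ {E | edgesAbove 0 E = ⊤} = 0 ∨ μ {E | edgesAbove 0 E = ⊤} = 1 := by
  set A := {E : GraphCfg | edgesAbove 0 E = ⊤} with hA
  have hAm : MeasurableSet A := measurableSet_edgesAbove_top 0
  have hae : graphShift ⁻¹' A =ᵐ[μ] A := by
    filter_upwards [hloc] with E hE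
    simp only [mem_preimage, hA, mem_setOf_eq, eq_iff_iff]
    exact key_iff E (hE 0)
  rcases herg.quasiErgodic.ae_empty_or_univ₀ hAm.nullMeasurableSet hae with h | h
  · left
    rw [measure_congr h, measure_empty]
  · right
    rw [measure_congr h, measure_univ]
end

section
/- Suppose in addition that the family (χ_{x,y})_{(x,y)∈I} is independent, that Σ_{k≥1} k · φ(k) < ∞, and that φ(k) < 1 for every k ≥ 2. Then P(χ_{x,y} = 0 for every (x, y) ∈ I with x ≤ −1, y ≥ 0 and (x, y) ≠ (−1, 0)) > 0; that is, with positive probability the only possible edge above the link {−1, 0} is the nearest-neighbour edge {−1, 0} itself, so that 0 is a cut point of the long-range percolation graph with positive probability. -/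
open MeasureTheory ProbabilityTheory Set
open scoped ENNReal

/-- The index set `I = {(x, y) ∈ ℤ × ℤ : x < y}` of potential edges. -/
def EdgeIdx : Type := {p : ℤ × ℤ // p.1 < p.2}

instance : Countable EdgeIdx := by unfold EdgeIdx; infer_instance

private lemma lrp_aux_key {a b : ℝ≥0∞} (ha : a ≤ 1) : 1 - (a + b) ≤ (1 - a) * (1 - b) := by
  rw [tsub_le_iff_right]
  calc (1:ℝ≥0∞) ≤ (1 - b) + b := le_tsub_add
    _ = ((1 - a) + a) * (1 - b) + b := by rw [tsub_add_cancel_of_le ha, one_mul]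
    _ = (1 - a) * (1 - b) + (a * (1 - b) + b) := by ring
    _ ≤ (1 - a) * (1 - b) + (a + b) := by
        gcongr
        exact mul_le_of_le_one_right' tsub_le_self

private lemma lrp_aux_prod {ι : Type*} (s : Finset ι) (g : ι → ℝ≥0∞) (hg : ∀ i, g i ≤ 1) :
    1 - ∑ i ∈ s, g i ≤ ∏ i ∈ s, (1 - g i) := by
  classical
  induction s using Finset.induction_on with
  | empty => simp
  | insert _ _ hj ih =>
    rename_i a s
    rw [Finset.sum_insert hj, Finset.prod_insert hj]
    exact le_trans (lrp_aux_key (hg a)) (mul_le_mul_right ih _)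

private lemma lrp_aux_sub {ι : Type*} (s t : Finset ι) (h : s ⊆ t) (g : ι → ℝ≥0∞)
    (hg : ∀ i, g i ≤ 1) : ∏ i ∈ t, g i ≤ ∏ i ∈ s, g i := by
  classical
  rw [← Finset.prod_sdiff h]
  exact mul_le_of_le_one_left' (Finset.prod_le_one' (fun i _ => hg i))

/-- For independent long-range percolation with `Σ_{k≥1} k φ(k) < ∞` and `φ(k) < 1` for
`k ≥ 2`, with positive probability no edge other than the nearest-neighbour edge `{−1, 0}`
lies above the link `{−1, 0}`; i.e. `0` is a cut point with positive probability. -/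
theorem lrp_cut_point_positive_probability
    {Ω : Type*} [MeasurableSpace Ω] (P : Measure Ω) [IsProbabilityMeasure P]
    (φ : ℕ → ℝ) (hφ : ∀ k, φ k ∈ Set.Icc (0 : ℝ) 1)
    (χ : EdgeIdx → Ω → Bool)
    (hmeas : ∀ i, Measurable (χ i))
    (hber : ∀ i : EdgeIdx, P {ω | χ i ω = true} = ENNReal.ofReal (φ (i.1.2 - i.1.1).toNat))
    (hind : iIndepFun χ P)
    (hsum : (∑' k : ℕ, (k : ℝ≥0∞) * ENNReal.ofReal (φ k)) ≠ ⊤)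
    (hlt : ∀ k : ℕ, 2 ≤ k → φ k < 1) :
    0 < P {ω | ∀ i : EdgeIdx, i.1.1 ≤ -1 → 0 ≤ i.1.2 → i.1 ≠ (-1, 0) → χ i ω = false} := by
  classical
  set S : Set EdgeIdx := {i | i.1.1 ≤ -1 ∧ 0 ≤ i.1.2 ∧ i.1 ≠ (-1, 0)} with hS
  set A : EdgeIdx → Set Ω := fun i => (χ i) ⁻¹' {false} with hA
  set q : EdgeIdx → ℝ≥0∞ := fun i => ENNReal.ofReal (φ (i.1.2 - i.1.1).toNat) with hq
  have hq1 : ∀ i, q i ≤ 1 := fun i => ENNReal.ofReal_le_one.2 (hφ _).2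
  have hAmeas : ∀ i, MeasurableSet (A i) := fun i => (hmeas i) (measurableSet_singleton false)
  have hPA : ∀ i, P (A i) = 1 - q i := by
    intro i
    have h1 : A i = {ω | χ i ω = true}ᶜ := by
      ext ω; simp [hA]
    have h2 : MeasurableSet {ω | χ i ω = true} := (hmeas i) (measurableSet_singleton true)
    rw [h1, measure_compl h2 (measure_ne_top _ _), measure_univ, hber]
  have hPA1 : ∀ i, P (A i) ≤ 1 := fun i => prob_le_one
  -- gap is at least 2 on S
  have hgap : ∀ i : EdgeIdx, i ∈ S → 2 ≤ i.1.2 - i.1.1 := by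
    intro i hi
    obtain ⟨h1, h2, h3⟩ := hi
    have h4 : ¬(i.1.1 = -1 ∧ i.1.2 = 0) := by
      intro h; exact h3 (Prod.ext h.1 h.2)
    have h5 : i.1.1 < i.1.2 := i.2
    omega
  -- positivity of each factor on S
  have hPApos : ∀ i : EdgeIdx, i ∈ S → P (A i) ≠ 0 := by
    intro i hi
    rw [hPA]
    have : q i < 1 := by
      rw [hq]
      exact ENNReal.ofReal_lt_one.2 (hlt _ (by have := hgap i hi; omega))
    exact (tsub_pos_of_lt this).ne'
  -- the sum of q over S is finite
  have htsum : (∑' s : ↥S, q s.1) ≠ ⊤ := by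
    set F : ℕ × ℕ → ℝ≥0∞ := fun p => if p.2 < p.1 then ENNReal.ofReal (φ p.1) else 0 with hF
    have hψ : ∀ s : ↥S, ((-1 - s.1.1.1).toNat) < ((s.1.1.2 - s.1.1.1).toNat) := by
      intro s
      obtain ⟨h1, h2, _⟩ := s.2
      omega
    set ψ : ↥S → ℕ × ℕ := fun s => ((s.1.1.2 - s.1.1.1).toNat, (-1 - s.1.1.1).toNat) with hψdef
    have hinj : Function.Injective ψ := by
      intro s t hst
      rw [hψdef] at hst
      simp only [Prod.mk.injEq] at hst
      obtain ⟨hs1, hs2, _⟩ := s.2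
      obtain ⟨ht1, ht2, _⟩ := t.2
      have : s.1.1 = t.1.1 := by
        have e1 : s.1.1.1 = t.1.1.1 := by omega
        have e2 : s.1.1.2 = t.1.1.2 := by omega
        exact Prod.ext e1 e2
      exact Subtype.ext (Subtype.ext this)
    have hle : (∑' s : ↥S, q s.1) ≤ ∑' p : ℕ × ℕ, F p := by
      refine ENNReal.summable.tsum_le_tsum_of_inj ψ hinj (fun _ _ => zero_le) (fun s => ?_)
        ENNReal.summable
      rw [hF, hq]
      simp only [hψdef]
      rw [if_pos (hψ s)]
    have heq : (∑' p : ℕ × ℕ, F p) = ∑' k : ℕ, (k : ℝ≥0∞) * ENNReal.ofReal (φ k) := by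
      rw [ENNReal.tsum_prod']
      refine tsum_congr (fun k => ?_)
      have : (∑' j : ℕ, F (k, j)) = ∑ j ∈ Finset.range k, ENNReal.ofReal (φ k) := by
        have h0 : (∑' j : ℕ, F (k, j)) = ∑ j ∈ Finset.range k, F (k, j) := by
          refine tsum_eq_sum (s := Finset.range k) ?_
          intro j hj
          rw [hF]
          simp only [Finset.mem_range, not_lt] at hj
          exact if_neg (by omega)
        rw [h0]
        refine Finset.sum_congr rfl (fun j hj => ?_)
        rw [hF]
        simp only [Finset.mem_range] at hj
        exact if_pos hj
      rw [this, Finset.sum_const, Finset.card_range, nsmul_eq_mul]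
    exact ne_top_of_le_ne_top hsum (hle.trans heq.le)
  -- choose a finite set capturing most of the mass
  obtain ⟨F₀, hF₀⟩ : ∃ F₀ : Finset ↥S, (∑' x : {i : ↥S // i ∉ F₀}, q x.1.1) < 1/2 := by
    have ht := ENNReal.tendsto_tsum_compl_atTop_zero (f := fun s : ↥S => q s.1) htsum
    have h2 : (0:ℝ≥0∞) < 1/2 := by norm_num
    exact (ht.eventually_lt_const h2).exists
  have htail : ∀ H : Finset ↥S, (∀ s ∈ H, s ∉ F₀) → ∑ s ∈ H, q s.1 ≤ 1/2 := by
    intro H hH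
    refine le_trans ?_ hF₀.le
    let e : {x // x ∈ H} → {i : ↥S // i ∉ F₀} := fun x => ⟨x.1, hH x.1 x.2⟩
    have he : Function.Injective e := by
      intro a b hab
      have h' := congrArg Subtype.val hab
      exact Subtype.ext h'
    calc ∑ s ∈ H, q s.1 = ∑ x ∈ H.attach, q ((e x).1).1 := (Finset.sum_attach _ _).symm
      _ = ∑ y ∈ H.attach.image e, q (y.1).1 :=
          (Finset.sum_image (f := fun y : {i : ↥S // i ∉ F₀} => q (y.1).1)
            (fun a _ b _ h => he h)).symm
      _ ≤ ∑' y : {i : ↥S // i ∉ F₀}, q (y.1).1 := ENNReal.sum_le_tsum _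
  -- finite-intersection product formula
  have hprod : ∀ G : Finset EdgeIdx, P (⋂ i ∈ G, A i) = ∏ i ∈ G, P (A i) := by
    intro G
    exact hind.meas_biInter (fun i _ => ⟨{false}, measurableSet_singleton false, rfl⟩)
  have hprodS : ∀ G : Finset ↥S, P (⋂ s ∈ G, A s.1) = ∏ s ∈ G, P (A s.1) := by
    intro G
    have h1 := hprod (G.map ⟨Subtype.val, Subtype.val_injective⟩)
    rw [Finset.prod_map] at h1
    have h2 : (⋂ i ∈ G.map ⟨Subtype.val, Subtype.val_injective⟩, A i) = ⋂ s ∈ G, A s.1 := by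
      ext ω
      simp [Finset.mem_map]
    rw [h2] at h1
    exact h1
  -- enumeration of S
  have hSne : Nonempty ↥S := by
    refine ⟨⟨⟨(-2, 0), ?_⟩, ?_, ?_, ?_⟩⟩
    · show (-2 : ℤ) < 0; norm_num
    · show (-2 : ℤ) ≤ -1; norm_num
    · show (0 : ℤ) ≤ 0; norm_num
    · show ((-2 : ℤ), (0 : ℤ)) ≠ (-1, 0); simp
  obtain ⟨f, hf⟩ := exists_surjective_nat ↥S
  set G : ℕ → Finset ↥S := fun n => F₀ ∪ (Finset.range (n+1)).image f with hG
  set g : ℕ → Set Ω := fun n => ⋂ s ∈ G n, A s.1 with hg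
  have hGmono : Monotone G := by
    intro m n hmn
    exact Finset.union_subset_union_right
      (Finset.image_subset_image (Finset.range_subset_range.2 (by omega)))
  have hganti : Antitone g := by
    intro m n hmn ω hω
    simp only [hg, Set.mem_iInter] at hω ⊢
    intro s hs
    exact hω s (hGmono hmn hs)
  have hgmeas : ∀ n, MeasurableSet (g n) := by
    intro n
    exact Finset.measurableSet_biInter _ (fun s _ => hAmeas s.1)
  -- lower bound the measure of each g n
  set δ : ℝ≥0∞ := ∏ s ∈ F₀, P (A s.1) with hδ
  have hδ0 : δ ≠ 0 := by
    rw [hδ, Finset.prod_ne_zero_iff]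
    exact fun s _ => hPApos s.1 s.2
  have hbound : ∀ n, δ * (1/2) ≤ P (g n) := by
    intro n
    rw [hg]
    simp only []
    rw [hprodS (G n)]
    have hsplit : F₀ ∪ ((G n) \ F₀) = G n := by
      rw [Finset.union_sdiff_of_subset (Finset.subset_union_left)]
    rw [← hsplit, Finset.prod_union Finset.disjoint_sdiff]
    refine mul_le_mul' le_rfl ?_
    have h1 : ∀ s ∈ (G n) \ F₀, s ∉ F₀ := fun s hs => (Finset.mem_sdiff.1 hs).2
    have h2 : (1:ℝ≥0∞) - ∑ s ∈ (G n) \ F₀, q s.1 ≤ ∏ s ∈ (G n) \ F₀, (1 - q s.1) :=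
      lrp_aux_prod _ _ (fun s => hq1 s.1)
    have h3 : (1:ℝ≥0∞)/2 ≤ 1 - ∑ s ∈ (G n) \ F₀, q s.1 := by
      have := tsub_le_tsub_left (htail _ h1) (1:ℝ≥0∞)
      calc (1:ℝ≥0∞)/2 = 1 - 1/2 := by
            rw [ENNReal.sub_half ENNReal.one_ne_top]
        _ ≤ 1 - ∑ s ∈ (G n) \ F₀, q s.1 := this
    calc (1:ℝ≥0∞)/2 ≤ ∏ s ∈ (G n) \ F₀, (1 - q s.1) := h3.trans h2
      _ = ∏ s ∈ (G n) \ F₀, P (A s.1) := by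
          refine Finset.prod_congr rfl (fun s _ => ?_)
          rw [hPA]
  -- pass to the limit
  have hlim := tendsto_measure_iInter_atTop (μ := P) (s := g)
    (fun n => (hgmeas n).nullMeasurableSet) hganti ⟨0, measure_ne_top _ _⟩
  have hInter : δ * (1/2) ≤ P (⋂ n, g n) := ge_of_tendsto' hlim hbound
  have hsub : (⋂ n, g n) ⊆
      {ω | ∀ i : EdgeIdx, i.1.1 ≤ -1 → 0 ≤ i.1.2 → i.1 ≠ (-1, 0) → χ i ω = false} := by
    intro ω hω i h1 h2 h3
    have hiS : i ∈ S := ⟨h1, h2, h3⟩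
    obtain ⟨m, hm⟩ := hf ⟨i, hiS⟩
    have hmem : (⟨i, hiS⟩ : ↥S) ∈ G m := by
      rw [hG]
      exact Finset.mem_union_right _ (Finset.mem_image.2 ⟨m, Finset.self_mem_range_succ m, hm⟩)
    have := Set.mem_iInter.1 hω m
    rw [hg] at this
    simp only [Set.mem_iInter] at this
    have := this ⟨i, hiS⟩ hmem
    simpa [hA] using this
  calc (0:ℝ≥0∞) < δ * (1/2) := ENNReal.mul_pos hδ0 (by norm_num)
    _ ≤ P (⋂ n, g n) := hInter
    _ ≤ _ := measure_mono hsub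
end

section
/- Let (R_j)_{j ∈ ℤ} be identically distributed random variables with values in [0, ∞) whose common expectation is finite, E[R_0] < ∞ (no independence is required). Then the expected degree of 0 in the Gilbert graph on ℤ is finite: E[#{j ∈ ℤ, j ≠ 0 : |j| ≤ R_0 + R_j}] < ∞; in particular deg(0) < ∞ almost surely. -/
open MeasureTheory ProbabilityTheory Set
open scoped ENNReal

private lemma aux_count (x : ℝ≥0∞) :
    ∑' n : ℕ, (if ((n : ℝ≥0∞) + 1 ≤ x) then (1 : ℝ≥0∞) else 0) ≤ x := by
  classical
  rw [ENNReal.tsum_eq_iSup_sum]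
  refine iSup_le fun s => ?_
  rw [Finset.sum_boole]
  set t := s.filter (fun n : ℕ => (n : ℝ≥0∞) + 1 ≤ x) with ht
  rcases t.eq_empty_or_nonempty with h | h
  · simp [h]
  · have hm := t.max'_mem h
    have hP : ((t.max' h : ℝ≥0∞) + 1 ≤ x) := (Finset.mem_filter.mp hm).2
    have hcard : t.card ≤ t.max' h + 1 := by
      have : t ⊆ Finset.range (t.max' h + 1) := fun a ha =>
        Finset.mem_range.mpr (Nat.lt_succ_of_le (Finset.le_max' t a ha))
      simpa using Finset.card_le_card this
    calc (t.card : ℝ≥0∞) ≤ ((t.max' h + 1 : ℕ) : ℝ≥0∞) := by exact_mod_cast hcard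
      _ = (t.max' h : ℝ≥0∞) + 1 := by push_cast; ring
      _ ≤ x := hP

private lemma aux_tail {Ω : Type*} [MeasurableSpace Ω] (P : Measure Ω)
    (g : Ω → ℝ≥0∞) (hg : Measurable g) :
    ∑' n : ℕ, P {ω | (n : ℝ≥0∞) + 1 ≤ g ω} ≤ ∫⁻ ω, g ω ∂P := by
  classical
  have hms : ∀ n : ℕ, MeasurableSet {ω | (n : ℝ≥0∞) + 1 ≤ g ω} := fun n =>
    measurableSet_le measurable_const hg
  have h1 : ∀ n : ℕ, P {ω | (n : ℝ≥0∞) + 1 ≤ g ω}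
      = ∫⁻ ω, (if (n : ℝ≥0∞) + 1 ≤ g ω then 1 else 0) ∂P := by
    intro n
    rw [← lintegral_indicator_one (hms n)]
    refine lintegral_congr fun ω => ?_
    simp [Set.indicator_apply]
  simp_rw [h1]
  rw [← lintegral_tsum (fun n => (Measurable.ite (hms n) measurable_const
    measurable_const).aemeasurable)]
  exact lintegral_mono fun ω => aux_count (g ω)

set_option maxHeartbeats 1000000 in
/-- Gilbert graph on `ℤ` with identically distributed (not necessarily independent)
radii of finite mean: the expected degree of `0` is finite; in particular the degree
of `0` is a.s. finite. -/
theorem gilbert_finite_expected_degree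
    {Ω : Type*} [MeasurableSpace Ω] (P : Measure Ω) [IsProbabilityMeasure P]
    (R : ℤ → Ω → ℝ)
    (hmeas : ∀ j, Measurable (R j))
    (hnonneg : ∀ j ω, 0 ≤ R j ω)
    (hid : ∀ j : ℤ, IdentDistrib (R j) (R 0) P P)
    (hmean : ∫⁻ ω, ENNReal.ofReal (R 0 ω) ∂P ≠ ⊤) :
    (∫⁻ ω, (({j : ℤ | j ≠ 0 ∧ |(j : ℝ)| ≤ R 0 ω + R j ω}.encard : ℝ≥0∞)) ∂P ≠ ⊤) ∧
    (∀ᵐ ω ∂P, {j : ℤ | j ≠ 0 ∧ |(j : ℝ)| ≤ R 0 ω + R j ω}.Finite) := by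
  classical
  -- the events
  set M : ℤ → Set Ω := fun j => {ω | j ≠ 0 ∧ |(j : ℝ)| ≤ R 0 ω + R j ω} with hM
  have hMmeas : ∀ j, MeasurableSet (M j) := by
    intro j
    by_cases hj : j = 0
    · simp only [hM, hj]
      convert MeasurableSet.empty
      ext ω; simp
    · have : M j = {ω | |(j : ℝ)| ≤ R 0 ω + R j ω} := by
        ext ω; simp [hM, hj]
      rw [this]
      exact measurableSet_le measurable_const ((hmeas 0).add (hmeas j))
  -- pointwise expression of the cardinality as a sum of indicators
  have hpt : ∀ ω, (({j : ℤ | j ≠ 0 ∧ |(j : ℝ)| ≤ R 0 ω + R j ω}.encard : ℝ≥0∞))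
      = ∑' j : ℤ, (M j).indicator (fun _ => (1 : ℝ≥0∞)) ω := by
    intro ω
    rw [← ENNReal.tsum_set_one]
    refine (tsum_subtype {j : ℤ | j ≠ 0 ∧ |(j : ℝ)| ≤ R 0 ω + R j ω}
      (fun _ => (1 : ℝ≥0∞))).trans (tsum_congr fun j => ?_)
    simp only [Set.indicator_apply, hM, Set.mem_setOf_eq]
  have hFmeas : Measurable fun ω => ∑' j : ℤ, (M j).indicator (fun _ => (1 : ℝ≥0∞)) ω :=
    Measurable.ennreal_tsum fun j => measurable_const.indicator (hMmeas j)
  -- the integral equals the sum of probabilities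
  have hint : ∫⁻ ω, (({j : ℤ | j ≠ 0 ∧ |(j : ℝ)| ≤ R 0 ω + R j ω}.encard : ℝ≥0∞)) ∂P
      = ∑' j : ℤ, P (M j) := by
    rw [lintegral_congr hpt,
      lintegral_tsum fun j => (measurable_const.indicator (hMmeas j)).aemeasurable]
    exact tsum_congr fun j => lintegral_indicator_one (hMmeas j)
  -- tail probabilities
  set T : ℕ → ℝ≥0∞ := fun n => P {ω | (n : ℝ≥0∞) + 1 ≤ ENNReal.ofReal (2 * R 0 ω)} with hT
  have hTsum : ∑' n : ℕ, T n ≤ 2 * ∫⁻ ω, ENNReal.ofReal (R 0 ω) ∂P := by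
    have h2 : ∫⁻ ω, ENNReal.ofReal (2 * R 0 ω) ∂P = 2 * ∫⁻ ω, ENNReal.ofReal (R 0 ω) ∂P := by
      rw [← lintegral_const_mul 2 (hmeas 0).ennreal_ofReal]
      refine lintegral_congr fun ω => ?_
      rw [ENNReal.ofReal_mul (by norm_num)]
      norm_num
    rw [← h2]
    exact aux_tail P _ ((hmeas 0).const_mul 2).ennreal_ofReal
  -- the per-site bound: P (M j) ≤ 2 * T (j.natAbs - 1) for j ≠ 0
  have hbound : ∀ j : ℤ, j ≠ 0 → P (M j) ≤ 2 * T (j.natAbs - 1) := by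
    intro j hj
    have hT' : T (j.natAbs - 1) = P {ω | |(j : ℝ)| ≤ 2 * R 0 ω} := by
      have hnat : 1 ≤ j.natAbs := Nat.one_le_iff_ne_zero.mpr (Int.natAbs_ne_zero.mpr hj)
      have habs : |(j : ℝ)| = (j.natAbs : ℝ) := by rw [Nat.cast_natAbs, Int.cast_abs]
      have hcast : ((j.natAbs - 1 : ℕ) : ℝ≥0∞) + 1 = ENNReal.ofReal (j.natAbs : ℝ) := by
        rw [ENNReal.ofReal_natCast]
        have h := Nat.succ_pred_eq_of_pos hnat
        exact_mod_cast h
      rw [hT]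
      refine congrArg P ?_
      ext ω
      simp only [Set.mem_setOf_eq, hcast, habs]
      rw [ENNReal.ofReal_le_ofReal_iff (by have := hnonneg 0 ω; positivity)]
    have hsub : M j ⊆ {ω | |(j : ℝ)| ≤ 2 * R 0 ω} ∪ {ω | |(j : ℝ)| ≤ 2 * R j ω} := by
      intro ω hω
      rcases hω with ⟨_, h⟩
      by_contra hcon
      simp only [Set.mem_union, Set.mem_setOf_eq] at hcon
      push_neg at hcon
      obtain ⟨h1, h2⟩ := hcon
      linarith
    have hid' : P {ω | |(j : ℝ)| ≤ 2 * R j ω} = P {ω | |(j : ℝ)| ≤ 2 * R 0 ω} := by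
      have hs : MeasurableSet {x : ℝ | |(j : ℝ)| ≤ 2 * x} :=
        measurableSet_le measurable_const (measurable_id.const_mul 2)
      exact (hid j).measure_mem_eq hs
    calc P (M j) ≤ P ({ω | |(j : ℝ)| ≤ 2 * R 0 ω} ∪ {ω | |(j : ℝ)| ≤ 2 * R j ω}) :=
          measure_mono hsub
      _ ≤ P {ω | |(j : ℝ)| ≤ 2 * R 0 ω} + P {ω | |(j : ℝ)| ≤ 2 * R j ω} := measure_union_le _ _
      _ = 2 * T (j.natAbs - 1) := by rw [hid', hT', two_mul]
  -- sum over ℤ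
  have hsum : ∑' j : ℤ, P (M j) ≤ 4 * ∑' n : ℕ, T n := by
    have hF : ∀ j : ℤ, P (M j) ≤ (fun j : ℤ => if j = 0 then 0 else 2 * T (j.natAbs - 1)) j := by
      intro j
      by_cases hj : j = 0
      · simp only [hj, if_pos rfl]
        have : M (0 : ℤ) = ∅ := by ext ω; simp [hM]
        simp [this]
      · simp only [if_neg hj]
        exact hbound j hj
    refine le_trans (ENNReal.tsum_le_tsum hF) ?_
    rw [tsum_of_nat_of_neg_add_one ENNReal.summable ENNReal.summable]
    have hneg : (∑' n : ℕ, (fun j : ℤ => if j = 0 then 0 else 2 * T (j.natAbs - 1)) (-(n + 1)))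
        = ∑' n : ℕ, 2 * T n := by
      refine tsum_congr fun n => ?_
      have h0 : (-(n + 1 : ℤ)) ≠ 0 := by omega
      have h1 : (-(n + 1 : ℤ)).natAbs = n + 1 := by omega
      simp only [if_neg h0, h1, Nat.add_sub_cancel]
    have hpos : (∑' n : ℕ, (fun j : ℤ => if j = 0 then 0 else 2 * T (j.natAbs - 1)) (n : ℤ))
        = ∑' n : ℕ, 2 * T n := by
      rw [tsum_eq_zero_add' ENNReal.summable]
      have h0 : (fun j : ℤ => if j = 0 then 0 else 2 * T (j.natAbs - 1)) ((0 : ℕ) : ℤ)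
          = 0 := by norm_num
      rw [h0, zero_add]
      refine tsum_congr fun n => ?_
      have hne : ((n + 1 : ℕ) : ℤ) ≠ 0 := by exact_mod_cast Nat.succ_ne_zero n
      have hna : ((n + 1 : ℕ) : ℤ).natAbs = n + 1 := Int.natAbs_natCast (n + 1)
      simp only [if_neg hne, hna, Nat.add_sub_cancel]
    rw [hpos, hneg, ENNReal.tsum_mul_left]
    exact le_of_eq (by ring)
  -- put everything together
  have hfin : ∫⁻ ω, (({j : ℤ | j ≠ 0 ∧ |(j : ℝ)| ≤ R 0 ω + R j ω}.encard : ℝ≥0∞)) ∂P ≠ ⊤ := by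
    rw [hint]
    refine ne_top_of_le_ne_top ?_ (hsum.trans (mul_le_mul_right hTsum 4))
    exact ENNReal.mul_ne_top (by norm_num) (ENNReal.mul_ne_top (by norm_num) hmean)
  refine ⟨hfin, ?_⟩
  have hlt : ∀ᵐ ω ∂P, (∑' j : ℤ, (M j).indicator (fun _ => (1 : ℝ≥0∞)) ω) < ⊤ := by
    refine ae_lt_top hFmeas ?_
    rwa [← lintegral_congr hpt]
  filter_upwards [hlt] with ω hω
  rw [← hpt ω] at hω
  rw [← Set.encard_lt_top_iff, ← ENat.toENNReal_lt, ENat.toENNReal_top]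
  exact hω
end

section
/- Let φ : (0,1) × (0,1) × (0,∞) → [0,1] be measurable and non-increasing in its third argument, and suppose there exists μ > 0 such that Σ_{n≥1} 2^{2n} ∫_{2^{−n−μn}}^{1} ∫_{2^{−n−μn}}^{1} φ(u, v, 2^n) du dv < ∞. Then Σ_{n≥0} ∫_0^1 ∫_0^1 ∫_{2^n}^{2^{n+1}} φ(u, v, x) dx du dv < ∞; equivalently, ∫_0^1 ∫_0^1 ∫_1^∞ φ(u, v, x) dx du dv < ∞. (This is the sparsity estimate showing that condition (2.3) of the paper implies finite expected root degree for the weight-dependent random connection model.) -/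
open MeasureTheory Set
open scoped ENNReal

/-- Sparsity for weight-dependent random connection models: if the connection function
`φ` is non-increasing in the distance argument and satisfies condition (2.3), i.e. for
some `m > 0` the sum `Σ_{n≥1} 2^{2n} ∫_{2^{−n−mn}}^1 ∫_{2^{−n−mn}}^1 φ(u,v,2^n) du dv`
is finite, then `Σ_{n≥0} ∫_0^1 ∫_0^1 ∫_{2^n}^{2^{n+1}} φ(u,v,x) dx du dv < ∞`;
equivalently `∫_0^1 ∫_0^1 ∫_1^∞ φ(u,v,x) dx du dv < ∞`. -/
theorem wdrcm_sparsity
    (φ : ℝ → ℝ → ℝ → ℝ)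
    (hmeas : Measurable (fun p : ℝ × ℝ × ℝ => φ p.1 p.2.1 p.2.2))
    (hrange : ∀ u v x : ℝ, u ∈ Set.Ioo (0 : ℝ) 1 → v ∈ Set.Ioo (0 : ℝ) 1 → 0 < x →
      φ u v x ∈ Set.Icc (0 : ℝ) 1)
    (hmono : ∀ u v : ℝ, u ∈ Set.Ioo (0 : ℝ) 1 → v ∈ Set.Ioo (0 : ℝ) 1 →
      AntitoneOn (φ u v) (Set.Ioi (0 : ℝ)))
    (hcond : ∃ m : ℝ, 0 < m ∧
      (∑' n : ℕ, (2 : ℝ≥0∞) ^ (2 * (n + 1)) *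
        ∫⁻ u in Set.Ioc ((2 : ℝ) ^ (-(1 + m) * ((n : ℝ) + 1))) 1,
          ∫⁻ v in Set.Ioc ((2 : ℝ) ^ (-(1 + m) * ((n : ℝ) + 1))) 1,
            ENNReal.ofReal (φ u v ((2 : ℝ) ^ (n + 1)))) ≠ ⊤) :
    ((∑' n : ℕ, ∫⁻ u in Set.Ioo (0 : ℝ) 1, ∫⁻ v in Set.Ioo (0 : ℝ) 1,
        ∫⁻ x in Set.Ioc ((2 : ℝ) ^ n) ((2 : ℝ) ^ (n + 1)),
          ENNReal.ofReal (φ u v x)) ≠ ⊤) ∧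
    ((∫⁻ u in Set.Ioo (0 : ℝ) 1, ∫⁻ v in Set.Ioo (0 : ℝ) 1,
        ∫⁻ x in Set.Ioi (1 : ℝ), ENNReal.ofReal (φ u v x)) ≠ ⊤) := by
  obtain ⟨m, hm, hsum⟩ := hcond
  -- abbreviations
  set F : ℕ → ℝ≥0∞ := fun n => ∫⁻ u in Set.Ioo (0 : ℝ) 1, ∫⁻ v in Set.Ioo (0 : ℝ) 1,
      ∫⁻ x in Set.Ioc ((2 : ℝ) ^ n) ((2 : ℝ) ^ (n + 1)), ENNReal.ofReal (φ u v x) with hFdef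
  set J : ℕ → ℝ≥0∞ := fun n => ∫⁻ u in Set.Ioc ((2 : ℝ) ^ (-(1 + m) * ((n : ℝ) + 1))) 1,
      ∫⁻ v in Set.Ioc ((2 : ℝ) ^ (-(1 + m) * ((n : ℝ) + 1))) 1,
        ENNReal.ofReal (φ u v ((2 : ℝ) ^ (n + 1))) with hJdef
  -- measurability facts
  have hφ : Measurable (fun p : ℝ × ℝ × ℝ => ENNReal.ofReal (φ p.1 p.2.1 p.2.2)) :=
    hmeas.ennreal_ofReal
  have hv : ∀ u c : ℝ, Measurable fun v => ENNReal.ofReal (φ u v c) := fun u c =>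
    hφ.comp (measurable_const.prodMk (measurable_id.prodMk measurable_const))
  have hDu : ∀ (c : ℝ) (s : Set ℝ), Measurable fun u => ∫⁻ v in s, ENNReal.ofReal (φ u v c) :=
    fun c s =>
      (hφ.comp (measurable_fst.prodMk (measurable_snd.prodMk measurable_const))
        : Measurable (fun q : ℝ × ℝ => ENNReal.ofReal (φ q.1 q.2 c))).lintegral_prod_right'
  have hIv : ∀ (u : ℝ) (s : Set ℝ),
      Measurable fun v => ∫⁻ x in s, ENNReal.ofReal (φ u v x) := fun u s =>
    (hφ.comp (measurable_const.prodMk measurable_id)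
      : Measurable (fun q : ℝ × ℝ => ENNReal.ofReal (φ u q.1 q.2))).lintegral_prod_right'
  have hIu : ∀ (s t : Set ℝ),
      Measurable fun u => ∫⁻ v in s, ∫⁻ x in t, ENNReal.ofReal (φ u v x) := by
    intro s t
    have h0 : Measurable (fun r : (ℝ × ℝ) × ℝ => ENNReal.ofReal (φ r.1.1 r.1.2 r.2)) :=
      hφ.comp ((measurable_fst.comp measurable_fst).prodMk
        ((measurable_snd.comp measurable_fst).prodMk measurable_snd))
    exact (h0.lintegral_prod_right'
      : Measurable (fun q : ℝ × ℝ => ∫⁻ x in t, ENNReal.ofReal (φ q.1 q.2 x))).lintegral_prod_right'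
  have h2n : ∀ n : ℕ, (0:ℝ) < 2 ^ n := fun n => pow_pos two_pos n
  -- bound on the inner x-integral
  have hxbound : ∀ (n : ℕ) (u v : ℝ), u ∈ Ioo (0:ℝ) 1 → v ∈ Ioo (0:ℝ) 1 →
      (∫⁻ x in Ioc ((2:ℝ)^n) ((2:ℝ)^(n+1)), ENNReal.ofReal (φ u v x))
        ≤ ENNReal.ofReal (φ u v ((2:ℝ)^n)) * ENNReal.ofReal ((2:ℝ)^n) := by
    intro n u v hu hvv
    calc ∫⁻ x in Ioc ((2:ℝ)^n) ((2:ℝ)^(n+1)), ENNReal.ofReal (φ u v x)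
        ≤ ∫⁻ _x in Ioc ((2:ℝ)^n) ((2:ℝ)^(n+1)), ENNReal.ofReal (φ u v ((2:ℝ)^n)) := by
          refine setLIntegral_mono measurable_const (fun x hxm => ?_)
          exact ENNReal.ofReal_le_ofReal
            (hmono u v hu hvv (mem_Ioi.2 (h2n n)) (mem_Ioi.2 ((h2n n).trans hxm.1)) hxm.1.le)
      _ = ENNReal.ofReal (φ u v ((2:ℝ)^n)) * volume (Ioc ((2:ℝ)^n) ((2:ℝ)^(n+1))) :=
          setLIntegral_const _ _
      _ = ENNReal.ofReal (φ u v ((2:ℝ)^n)) * ENNReal.ofReal ((2:ℝ)^n) := by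
          rw [Real.volume_Ioc]
          congr 1
          rw [pow_succ]; ring
  -- F n ≤ D n * 2^n
  have hFD : ∀ n : ℕ, F n
      ≤ (∫⁻ u in Ioo (0:ℝ) 1, ∫⁻ v in Ioo (0:ℝ) 1, ENNReal.ofReal (φ u v ((2:ℝ)^n)))
          * ENNReal.ofReal ((2:ℝ)^n) := by
    intro n
    calc F n ≤ ∫⁻ u in Ioo (0:ℝ) 1,
          (∫⁻ v in Ioo (0:ℝ) 1, ENNReal.ofReal (φ u v ((2:ℝ)^n))) * ENNReal.ofReal ((2:ℝ)^n) := by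
          refine setLIntegral_mono ((hDu _ _).mul_const _) (fun u hu => ?_)
          calc (∫⁻ v in Ioo (0:ℝ) 1, ∫⁻ x in Ioc ((2:ℝ)^n) ((2:ℝ)^(n+1)), ENNReal.ofReal (φ u v x))
              ≤ ∫⁻ v in Ioo (0:ℝ) 1,
                  ENNReal.ofReal (φ u v ((2:ℝ)^n)) * ENNReal.ofReal ((2:ℝ)^n) :=
                setLIntegral_mono ((hv u _).mul_const _) (fun v hvm => hxbound n u v hu hvm)
            _ = _ := lintegral_mul_const _ (hv u _)
      _ = _ := lintegral_mul_const _ (hDu _ _)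
  -- φ ≤ 1 bound
  have hVle : ∀ (c : ℝ), 0 < c → ∀ u ∈ Ioo (0:ℝ) 1, ∀ s : Set ℝ, s ⊆ Ioo 0 1 →
      (∫⁻ v in s, ENNReal.ofReal (φ u v c)) ≤ volume s := by
    intro c hc u hu s hs
    calc (∫⁻ v in s, ENNReal.ofReal (φ u v c)) ≤ ∫⁻ _v in s, 1 :=
        setLIntegral_mono measurable_const
          (fun v hvm => ENNReal.ofReal_le_one.2 (hrange u v c hu (hs hvm) hc).2)
      _ = volume s := by rw [setLIntegral_const, one_mul]
  have hvolIoo : volume (Ioo (0:ℝ) 1) = 1 := by simp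
  -- key splitting bound
  have hB : ∀ n : ℕ,
      (∫⁻ u in Ioo (0:ℝ) 1, ∫⁻ v in Ioo (0:ℝ) 1, ENNReal.ofReal (φ u v ((2:ℝ)^(n+1))))
      ≤ 2 * ENNReal.ofReal ((2:ℝ) ^ (-(1 + m) * ((n:ℝ) + 1))) + J n := by
    intro n
    set ε := (2:ℝ) ^ (-(1 + m) * ((n:ℝ) + 1)) with hεdef
    have hε0 : 0 < ε := Real.rpow_pos_of_pos two_pos _
    have hε1 : ε < 1 := by
      apply Real.rpow_lt_one_of_one_lt_of_neg one_lt_two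
      have h1 : (0:ℝ) < (1+m) * ((n:ℝ)+1) := by positivity
      linarith
    set c := (2:ℝ)^(n+1) with hcdef
    have hc0 : (0:ℝ) < c := pow_pos two_pos _
    have hsplit : Ioo (0:ℝ) 1 = Ioc 0 ε ∪ Ioo ε 1 := (Ioc_union_Ioo_eq_Ioo hε0.le hε1).symm
    have hsub1 : Ioc (0:ℝ) ε ⊆ Ioo 0 1 := fun x hx => ⟨hx.1, lt_of_le_of_lt hx.2 hε1⟩
    have hsub2 : Ioo ε (1:ℝ) ⊆ Ioo 0 1 := fun x hx => ⟨hε0.trans hx.1, hx.2⟩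
    have key : ∀ (g : ℝ → ℝ≥0∞),
        (∫⁻ t in Ioo (0:ℝ) 1, g t) ≤ (∫⁻ t in Ioc (0:ℝ) ε, g t) + ∫⁻ t in Ioo ε (1:ℝ), g t := by
      intro g
      rw [hsplit]
      exact lintegral_union_le _ _ _
    have hinnerB : ∀ u ∈ Ioo (0:ℝ) 1,
        (∫⁻ v in Ioo (0:ℝ) 1, ENNReal.ofReal (φ u v c))
          ≤ ENNReal.ofReal ε + ∫⁻ v in Ioc ε 1, ENNReal.ofReal (φ u v c) := by
      intro u hu
      refine (key _).trans (add_le_add ?_ ?_)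
      · exact (hVle c hc0 u hu _ hsub1).trans (le_of_eq (by rw [Real.volume_Ioc, sub_zero]))
      · exact lintegral_mono_set Ioo_subset_Ioc_self
    have part1 : (∫⁻ u in Ioc (0:ℝ) ε, ∫⁻ v in Ioo (0:ℝ) 1, ENNReal.ofReal (φ u v c))
        ≤ ENNReal.ofReal ε := by
      calc (∫⁻ u in Ioc (0:ℝ) ε, ∫⁻ v in Ioo (0:ℝ) 1, ENNReal.ofReal (φ u v c))
          ≤ ∫⁻ _u in Ioc (0:ℝ) ε, (1:ℝ≥0∞) :=
            setLIntegral_mono measurable_const (fun u hu =>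
              (hVle c hc0 u (hsub1 hu) _ subset_rfl).trans (le_of_eq hvolIoo))
        _ = volume (Ioc (0:ℝ) ε) := by rw [setLIntegral_const, one_mul]
        _ = ENNReal.ofReal ε := by rw [Real.volume_Ioc, sub_zero]
    have part2 : (∫⁻ u in Ioo ε (1:ℝ), ∫⁻ v in Ioo (0:ℝ) 1, ENNReal.ofReal (φ u v c))
        ≤ ENNReal.ofReal ε + ∫⁻ u in Ioc ε 1, ∫⁻ v in Ioc ε 1, ENNReal.ofReal (φ u v c) := by
      calc (∫⁻ u in Ioo ε (1:ℝ), ∫⁻ v in Ioo (0:ℝ) 1, ENNReal.ofReal (φ u v c))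
          ≤ ∫⁻ u in Ioo ε (1:ℝ),
              (ENNReal.ofReal ε + ∫⁻ v in Ioc ε 1, ENNReal.ofReal (φ u v c)) :=
            setLIntegral_mono (measurable_const.add (hDu c _)) (fun u hu => hinnerB u (hsub2 hu))
        _ = ENNReal.ofReal ε * volume (Ioo ε 1)
              + ∫⁻ u in Ioo ε (1:ℝ), ∫⁻ v in Ioc ε 1, ENNReal.ofReal (φ u v c) := by
            rw [lintegral_add_left measurable_const, setLIntegral_const]
        _ ≤ ENNReal.ofReal ε * 1
              + ∫⁻ u in Ioc ε 1, ∫⁻ v in Ioc ε 1, ENNReal.ofReal (φ u v c) := by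
            gcongr
            · rw [Real.volume_Ioo]
              exact ENNReal.ofReal_le_one.2 (by linarith)
            · exact Ioo_subset_Ioc_self
        _ = _ := by rw [mul_one]
    calc (∫⁻ u in Ioo (0:ℝ) 1, ∫⁻ v in Ioo (0:ℝ) 1, ENNReal.ofReal (φ u v c))
        ≤ (∫⁻ u in Ioc (0:ℝ) ε, ∫⁻ v in Ioo (0:ℝ) 1, ENNReal.ofReal (φ u v c))
          + ∫⁻ u in Ioo ε (1:ℝ), ∫⁻ v in Ioo (0:ℝ) 1, ENNReal.ofReal (φ u v c) := key _
      _ ≤ ENNReal.ofReal ε + (ENNReal.ofReal ε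
          + ∫⁻ u in Ioc ε 1, ∫⁻ v in Ioc ε 1, ENNReal.ofReal (φ u v c)) := add_le_add part1 part2
      _ = 2 * ENNReal.ofReal ε + J n := by rw [hJdef, two_mul, add_assoc]
  -- geometric ratio
  set r : ℝ≥0∞ := ENNReal.ofReal ((2:ℝ) ^ (-m)) with hrdef
  have hr1 : r < 1 := by
    rw [hrdef, ← ENNReal.ofReal_one]
    exact ENNReal.ofReal_lt_ofReal_iff_of_nonneg (Real.rpow_pos_of_pos two_pos _).le |>.2
      (Real.rpow_lt_one_of_one_lt_of_neg one_lt_two (neg_lt_zero.2 hm))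
  have hrpow : ∀ k : ℕ, ENNReal.ofReal ((2:ℝ) ^ (-(1 + m) * ((k:ℝ) + 1)))
      * ENNReal.ofReal ((2:ℝ)^(k+1)) = r ^ (k+1) := by
    intro k
    rw [hrdef, ← ENNReal.ofReal_mul (Real.rpow_pos_of_pos two_pos _).le,
      ← ENNReal.ofReal_pow (Real.rpow_pos_of_pos two_pos _).le]
    congr 1
    have h1 : (2:ℝ)^(k+1) = (2:ℝ) ^ (((k:ℝ)+1) : ℝ) := by
      rw [← Real.rpow_natCast 2 (k+1)]
      push_cast
      ring_nf
    have h2 : ((2:ℝ)^(-m))^(k+1) = (2:ℝ) ^ ((-m) * ((k:ℝ)+1)) := by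
      rw [← Real.rpow_natCast ((2:ℝ)^(-m)) (k+1), ← Real.rpow_mul (by norm_num : (0:ℝ) ≤ 2)]
      push_cast
      ring_nf
    rw [h1, ← Real.rpow_add two_pos, h2]
    congr 1
    ring
  -- 2^(k+1) as ENNReal
  have h2e : ∀ k : ℕ, ENNReal.ofReal ((2:ℝ)^(k+1)) ≤ (2:ℝ≥0∞) ^ (2*(k+1)) := by
    intro k
    rw [ENNReal.ofReal_pow (by norm_num : (0:ℝ) ≤ 2)]
    norm_num
    exact pow_le_pow_right₀ one_le_two (by omega)
  -- per-index bound for shifted sum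
  have hFk : ∀ k : ℕ, F (k+1) ≤ 2 * r ^ k + (2:ℝ≥0∞) ^ (2*(k+1)) * J k := by
    intro k
    calc F (k+1)
        ≤ (∫⁻ u in Ioo (0:ℝ) 1, ∫⁻ v in Ioo (0:ℝ) 1, ENNReal.ofReal (φ u v ((2:ℝ)^(k+1))))
            * ENNReal.ofReal ((2:ℝ)^(k+1)) := hFD (k+1)
      _ ≤ (2 * ENNReal.ofReal ((2:ℝ) ^ (-(1 + m) * ((k:ℝ) + 1))) + J k)
            * ENNReal.ofReal ((2:ℝ)^(k+1)) := mul_le_mul_left (hB k) _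
      _ = 2 * (ENNReal.ofReal ((2:ℝ) ^ (-(1 + m) * ((k:ℝ) + 1)))
            * ENNReal.ofReal ((2:ℝ)^(k+1))) + J k * ENNReal.ofReal ((2:ℝ)^(k+1)) := by ring
      _ ≤ 2 * r ^ (k+1) + (2:ℝ≥0∞) ^ (2*(k+1)) * J k := by
          rw [hrpow k, mul_comm (J k)]
          exact add_le_add_right (mul_le_mul_left (h2e k) _) _
      _ ≤ 2 * r ^ k + (2:ℝ≥0∞) ^ (2*(k+1)) * J k :=
          add_le_add_left
            (mul_le_mul_right (pow_le_pow_of_le_one (by positivity) hr1.le (Nat.le_succ k)) 2) _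
  -- first sum finite
  have hF0 : F 0 ≤ 1 := by
    calc F 0 ≤ (∫⁻ u in Ioo (0:ℝ) 1, ∫⁻ v in Ioo (0:ℝ) 1, ENNReal.ofReal (φ u v ((2:ℝ)^0)))
        * ENNReal.ofReal ((2:ℝ)^0) := hFD 0
      _ ≤ 1 * 1 := by
          gcongr
          · calc (∫⁻ u in Ioo (0:ℝ) 1, ∫⁻ v in Ioo (0:ℝ) 1, ENNReal.ofReal (φ u v ((2:ℝ)^0)))
                ≤ ∫⁻ _u in Ioo (0:ℝ) 1, (1:ℝ≥0∞) :=
                  setLIntegral_mono measurable_const (fun u hu =>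
                    (hVle _ (h2n 0) u hu _ subset_rfl).trans (le_of_eq hvolIoo))
              _ = 1 := by rw [setLIntegral_const, one_mul, hvolIoo]
          · simp
      _ = 1 := by rw [mul_one]
  have hmain : (∑' n : ℕ, F n) ≠ ⊤ := by
    rw [tsum_eq_zero_add' ENNReal.summable]
    refine ENNReal.add_ne_top.2 ⟨ne_top_of_le_ne_top ENNReal.one_ne_top hF0, ?_⟩
    have hle : (∑' k : ℕ, F (k+1)) ≤ (∑' k : ℕ, 2 * r ^ k)
        + ∑' k : ℕ, (2:ℝ≥0∞) ^ (2*(k+1)) * J k := by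
      rw [← ENNReal.tsum_add]
      exact ENNReal.tsum_le_tsum hFk
    refine ne_top_of_le_ne_top (ENNReal.add_ne_top.2 ⟨?_, hsum⟩) hle
    rw [ENNReal.tsum_mul_left, ENNReal.tsum_geometric]
    refine ENNReal.mul_ne_top (by norm_num) (ENNReal.inv_ne_top.2 ?_)
    simpa [tsub_eq_zero_iff_le] using hr1.not_ge
  refine ⟨hmain, ?_⟩
  -- decompose (1, ∞)
  have hUnion : Ioi (1:ℝ) = ⋃ n : ℕ, Ioc ((2:ℝ)^n) ((2:ℝ)^(n+1)) := by
    ext x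
    simp only [mem_Ioi, mem_iUnion, mem_Ioc]
    constructor
    · intro hx
      obtain ⟨k, hk1, hk2⟩ := exists_mem_Ioc_zpow (zero_lt_one.trans hx) (one_lt_two (α := ℝ))
      have hk0 : 0 ≤ k := by
        by_contra h
        push_neg at h
        have h1 : (2:ℝ)^(k+1) ≤ (2:ℝ)^(0:ℤ) :=
          zpow_le_zpow_right₀ one_le_two (by omega)
        rw [zpow_zero] at h1
        linarith
      lift k to ℕ using hk0 with n
      refine ⟨n, ?_, ?_⟩
      · exact_mod_cast hk1
      · exact_mod_cast hk2
    · rintro ⟨n, h1, _⟩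
      exact lt_of_le_of_lt (one_le_pow₀ one_le_two) h1
  have hdisj : Pairwise (Function.onFun Disjoint fun n : ℕ => Ioc ((2:ℝ)^n) ((2:ℝ)^(n+1))) := by
    have hmono2 : Monotone (fun n : ℕ => (2:ℝ)^n) := fun a b h => pow_le_pow_right₀ one_le_two h
    simpa using hmono2.pairwise_disjoint_on_Ioc_succ
  have h1 : ∀ u v : ℝ, (∫⁻ x in Ioi (1:ℝ), ENNReal.ofReal (φ u v x))
      = ∑' n : ℕ, ∫⁻ x in Ioc ((2:ℝ)^n) ((2:ℝ)^(n+1)), ENNReal.ofReal (φ u v x) := by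
    intro u v
    rw [hUnion]
    exact lintegral_iUnion (fun n => measurableSet_Ioc) hdisj _
  have h2 : ∀ u : ℝ, (∫⁻ v in Ioo (0:ℝ) 1, ∫⁻ x in Ioi (1:ℝ), ENNReal.ofReal (φ u v x))
      = ∑' n : ℕ, ∫⁻ v in Ioo (0:ℝ) 1,
          ∫⁻ x in Ioc ((2:ℝ)^n) ((2:ℝ)^(n+1)), ENNReal.ofReal (φ u v x) := by
    intro u
    rw [lintegral_congr (h1 u)]
    exact lintegral_tsum (fun n => (hIv u _).aemeasurable)
  have h3 : (∫⁻ u in Ioo (0:ℝ) 1, ∫⁻ v in Ioo (0:ℝ) 1,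
      ∫⁻ x in Ioi (1:ℝ), ENNReal.ofReal (φ u v x)) = ∑' n : ℕ, F n := by
    rw [lintegral_congr h2]
    exact lintegral_tsum (fun n => (hIu _ _).aemeasurable)
  rw [h3]
  exact hmain
end

section
/- Fix γ ∈ (0, 1) and define the connection function φ(u, v, x) = 1 if x ≤ u^{−γ} v^{−γ} and φ(u, v, x) = 0 otherwise. Then there exists μ > 0 with Σ_{n≥1} 2^{2n} ∫_{2^{−n−μn}}^{1} ∫_{2^{−n−μn}}^{1} φ(u, v, 2^n) du dv < ∞ if and only if γ < 1/2. -/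
open MeasureTheory Set
open scoped ENNReal


lemma lint_rpow_le (θ : ℝ) (a : ℝ) (hθ1 : θ < 1) (ha : 0 < a) (ha1 : a ≤ 1) :
    ∫⁻ u in Set.Ioc a 1, ENNReal.ofReal (u ^ (-θ)) ≤ ENNReal.ofReal (1 / (1 - θ)) := by
  have hint : IntegrableOn (fun u : ℝ => u ^ (-θ)) (Set.Ioc a 1) := by
    have := intervalIntegral.intervalIntegrable_rpow' (a := a) (b := 1) (r := -θ) (by linarith)
    rwa [intervalIntegrable_iff, uIoc_of_le ha1] at this
  rw [← ofReal_integral_eq_lintegral_ofReal hint]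
  · apply ENNReal.ofReal_le_ofReal
    rw [← intervalIntegral.integral_of_le ha1]
    rw [integral_rpow (Or.inl (by linarith))]
    have h1 : (1:ℝ) ^ (-θ + 1) = 1 := Real.one_rpow _
    have h2 : 0 ≤ a ^ (-θ + 1) := Real.rpow_nonneg ha.le _
    rw [h1, div_le_div_iff₀ (by linarith) (by linarith)]
    nlinarith
  · filter_upwards [ae_restrict_mem measurableSet_Ioc] with u hu using
      Real.rpow_nonneg (le_of_lt (ha.trans hu.1)) _

-- the indicator pointwise bound
lemma ind_le (γ θ : ℝ) (hγ : 0 < γ) (hθ0 : 0 ≤ θ) (hθ : γ * (θ / γ) = θ) (c u v : ℝ) (hc : 0 < c)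
    (hu : 0 < u) (hv : 0 < v) :
    (if c ≤ u ^ (-γ) * v ^ (-γ) then (1:ℝ≥0∞) else 0) ≤
      ENNReal.ofReal (c ^ (-(θ/γ))) * (ENNReal.ofReal (u ^ (-θ)) * ENNReal.ofReal (v ^ (-θ))) := by
  set s := θ / γ with hs
  split_ifs with h
  · rw [← ENNReal.ofReal_mul (Real.rpow_nonneg hu.le _),
      ← ENNReal.ofReal_mul (Real.rpow_nonneg hc.le _)]
    rw [show (1:ℝ≥0∞) = ENNReal.ofReal 1 by simp]
    apply ENNReal.ofReal_le_ofReal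
    have key : c ^ s ≤ u ^ (-θ) * v ^ (-θ) := by
      calc c ^ s ≤ (u ^ (-γ) * v ^ (-γ)) ^ s :=
            Real.rpow_le_rpow hc.le h (div_nonneg hθ0 hγ.le)
        _ = u ^ (-θ) * v ^ (-θ) := by
            rw [Real.mul_rpow (Real.rpow_nonneg hu.le _) (Real.rpow_nonneg hv.le _),
              ← Real.rpow_mul hu.le, ← Real.rpow_mul hv.le]
            rw [show -γ * s = -θ by rw [neg_mul, hθ]]
    calc (1:ℝ) = c ^ (-s) * c ^ s := by
          rw [← Real.rpow_add hc, neg_add_cancel, Real.rpow_zero]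
      _ ≤ c ^ (-s) * (u ^ (-θ) * v ^ (-θ)) := by
          apply mul_le_mul_of_nonneg_left key (Real.rpow_nonneg hc.le _)
  · exact zero_le

lemma upper (γ : ℝ) (hγ : γ ∈ Set.Ioo (0 : ℝ) 1) (hhalf : γ < 1/2) :
    (∑' n : ℕ, (2 : ℝ≥0∞) ^ (2 * (n + 1)) *
        ∫⁻ u in Set.Ioc ((2 : ℝ) ^ (-(1 + 1) * ((n : ℝ) + 1))) 1,
          ∫⁻ v in Set.Ioc ((2 : ℝ) ^ (-(1 + 1) * ((n : ℝ) + 1))) 1,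
            (if (2 : ℝ) ^ (n + 1) ≤ u ^ (-γ) * v ^ (-γ) then (1 : ℝ≥0∞) else 0)) ≠ ⊤ := by
  obtain ⟨hγ0, hγ1⟩ := hγ
  set θ : ℝ := γ + 1/2 with hθdef
  have hθ1 : θ < 1 := by simp only [hθdef]; linarith
  have hθ0 : 0 < θ := by simp only [hθdef]; linarith
  set s : ℝ := θ / γ with hs
  have hγθ : γ * (θ / γ) = θ := by field_simp
  have hs2 : 2 < s := by
    rw [hs, lt_div_iff₀ hγ0, hθdef]; linarith
  set K : ℝ≥0∞ := ENNReal.ofReal (1 / (1 - θ)) with hK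
  have hKtop : K ≠ ⊤ := ENNReal.ofReal_ne_top
  set x : ℝ≥0∞ := ENNReal.ofReal ((2:ℝ) ^ ((2:ℝ) - s)) with hx
  have hx1 : x < 1 := by
    rw [hx]
    exact ENNReal.ofReal_lt_one.mpr (Real.rpow_lt_one_of_one_lt_of_neg one_lt_two (by linarith))
  have hxtop : x ≠ ⊤ := ENNReal.ofReal_ne_top
  have key : ∀ n : ℕ, (2 : ℝ≥0∞) ^ (2 * (n + 1)) *
      (∫⁻ u in Set.Ioc ((2 : ℝ) ^ (-(1 + 1) * ((n : ℝ) + 1))) 1,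
        ∫⁻ v in Set.Ioc ((2 : ℝ) ^ (-(1 + 1) * ((n : ℝ) + 1))) 1,
          (if (2 : ℝ) ^ (n + 1) ≤ u ^ (-γ) * v ^ (-γ) then (1 : ℝ≥0∞) else 0)) ≤
      x ^ (n + 1) * (K * K) := by
    intro n
    set a : ℝ := (2:ℝ) ^ (-(1 + 1) * ((n : ℝ) + 1)) with ha
    have ha0 : 0 < a := Real.rpow_pos_of_pos two_pos _
    have hn1 : (0:ℝ) ≤ (n:ℝ) + 1 := by positivity
    have ha1 : a ≤ 1 := Real.rpow_le_one_of_one_le_of_nonpos one_le_two (by nlinarith)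
    set c : ℝ := (2:ℝ) ^ (n + 1) with hcdef
    have hc : (0:ℝ) < c := by positivity
    have hcs : 0 ≤ c ^ (-s) := Real.rpow_nonneg hc.le _
    have inner : ∀ u : ℝ, u ∈ Set.Ioc a 1 →
        (∫⁻ v in Set.Ioc a 1,
          (if c ≤ u ^ (-γ) * v ^ (-γ) then (1 : ℝ≥0∞) else 0)) ≤
        (ENNReal.ofReal (c ^ (-s)) * K) * ENNReal.ofReal (u ^ (-θ)) := by
      intro u hu
      have hu0 : 0 < u := ha0.trans hu.1
      calc (∫⁻ v in Set.Ioc a 1, (if c ≤ u ^ (-γ) * v ^ (-γ) then (1 : ℝ≥0∞) else 0))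
          ≤ ∫⁻ v in Set.Ioc a 1,
              (ENNReal.ofReal (c ^ (-s)) * ENNReal.ofReal (u ^ (-θ))) *
                ENNReal.ofReal (v ^ (-θ)) := by
            apply setLIntegral_mono' measurableSet_Ioc
            intro v hv
            have := ind_le γ θ hγ0 hθ0.le hγθ c u v hc hu0 (ha0.trans hv.1)
            calc (if c ≤ u ^ (-γ) * v ^ (-γ) then (1 : ℝ≥0∞) else 0)
                ≤ ENNReal.ofReal (c ^ (-(θ/γ))) *
                  (ENNReal.ofReal (u ^ (-θ)) * ENNReal.ofReal (v ^ (-θ))) := this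
              _ = (ENNReal.ofReal (c ^ (-s)) * ENNReal.ofReal (u ^ (-θ))) *
                  ENNReal.ofReal (v ^ (-θ)) := by rw [← hs]; ring
        _ = (ENNReal.ofReal (c ^ (-s)) * ENNReal.ofReal (u ^ (-θ))) *
              ∫⁻ v in Set.Ioc a 1, ENNReal.ofReal (v ^ (-θ)) := by
            rw [lintegral_const_mul' _ _ (ENNReal.mul_ne_top ENNReal.ofReal_ne_top
              ENNReal.ofReal_ne_top)]
        _ ≤ (ENNReal.ofReal (c ^ (-s)) * ENNReal.ofReal (u ^ (-θ))) * K :=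
            mul_le_mul_right (lint_rpow_le θ a hθ1 ha0 ha1) _
        _ = (ENNReal.ofReal (c ^ (-s)) * K) * ENNReal.ofReal (u ^ (-θ)) := by ring
    have outer : (∫⁻ u in Set.Ioc a 1, ∫⁻ v in Set.Ioc a 1,
        (if c ≤ u ^ (-γ) * v ^ (-γ) then (1 : ℝ≥0∞) else 0)) ≤
        ENNReal.ofReal (c ^ (-s)) * (K * K) := by
      calc (∫⁻ u in Set.Ioc a 1, ∫⁻ v in Set.Ioc a 1,
            (if c ≤ u ^ (-γ) * v ^ (-γ) then (1 : ℝ≥0∞) else 0))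
          ≤ ∫⁻ u in Set.Ioc a 1, (ENNReal.ofReal (c ^ (-s)) * K) * ENNReal.ofReal (u ^ (-θ)) :=
            setLIntegral_mono' measurableSet_Ioc inner
        _ = (ENNReal.ofReal (c ^ (-s)) * K) *
              ∫⁻ u in Set.Ioc a 1, ENNReal.ofReal (u ^ (-θ)) := by
            rw [lintegral_const_mul' _ _ (ENNReal.mul_ne_top ENNReal.ofReal_ne_top hKtop)]
        _ ≤ (ENNReal.ofReal (c ^ (-s)) * K) * K :=
            mul_le_mul_right (lint_rpow_le θ a hθ1 ha0 ha1) _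
        _ = ENNReal.ofReal (c ^ (-s)) * (K * K) := by ring
    calc (2 : ℝ≥0∞) ^ (2 * (n + 1)) *
        (∫⁻ u in Set.Ioc a 1, ∫⁻ v in Set.Ioc a 1,
          (if c ≤ u ^ (-γ) * v ^ (-γ) then (1 : ℝ≥0∞) else 0))
        ≤ (2 : ℝ≥0∞) ^ (2 * (n + 1)) * (ENNReal.ofReal (c ^ (-s)) * (K * K)) :=
          mul_le_mul_right outer _
      _ = ((2 : ℝ≥0∞) ^ (2 * (n + 1)) * ENNReal.ofReal (c ^ (-s))) * (K * K) := by ring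
      _ = x ^ (n + 1) * (K * K) := by
          congr 1
          have h2 : (2 : ℝ≥0∞) ^ (2 * (n + 1)) = ENNReal.ofReal ((2:ℝ) ^ (2 * (n + 1))) := by
            rw [ENNReal.ofReal_pow (by norm_num : (0:ℝ) ≤ 2)]
            norm_num
          rw [h2, hx, ← ENNReal.ofReal_pow (by positivity),
            ← ENNReal.ofReal_mul (by positivity)]
          congr 1
          rw [hcdef, ← Real.rpow_natCast (2:ℝ) (2 * (n + 1)),
            ← Real.rpow_natCast (2:ℝ) (n + 1),
            ← Real.rpow_natCast ((2:ℝ) ^ ((2:ℝ) - s)) (n + 1),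
            ← Real.rpow_mul (by norm_num : (0:ℝ) ≤ 2),
            ← Real.rpow_mul (by norm_num : (0:ℝ) ≤ 2),
            ← Real.rpow_add two_pos]
          congr 1
          push_cast
          ring
  apply ne_top_of_le_ne_top ?_ (ENNReal.tsum_le_tsum key)
  rw [ENNReal.tsum_mul_right]
  apply ENNReal.mul_ne_top ?_ (ENNReal.mul_ne_top hKtop hKtop)
  have : ∑' n : ℕ, x ^ (n + 1) = x * (1 - x)⁻¹ := by
    rw [← ENNReal.tsum_geometric x, ← ENNReal.tsum_mul_left]
    congr 1 with n
    rw [pow_succ']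
  rw [this]
  apply ENNReal.mul_ne_top hxtop
  rw [Ne, ENNReal.inv_eq_top]
  exact fun h => (tsub_pos_of_lt hx1).ne' h

lemma lower (γ m : ℝ) (hγ0 : 0 < γ) (hhalf : 1/2 ≤ γ) (hm : 0 < m) :
    (∑' n : ℕ, (2 : ℝ≥0∞) ^ (2 * (n + 1)) *
        ∫⁻ u in Set.Ioc ((2 : ℝ) ^ (-(1 + m) * ((n : ℝ) + 1))) 1,
          ∫⁻ v in Set.Ioc ((2 : ℝ) ^ (-(1 + m) * ((n : ℝ) + 1))) 1,
            (if (2 : ℝ) ^ (n + 1) ≤ u ^ (-γ) * v ^ (-γ) then (1 : ℝ≥0∞) else 0)) = ⊤ := by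
  by_contra h
  have hfin := ENNReal.finite_const_le_of_tsum_ne_top h
    (ε := ENNReal.ofReal (1/4)) (by simp)
  obtain ⟨N₀, hN₀⟩ := exists_nat_ge (1/m)
  have key : ∀ n : ℕ, N₀ ≤ n → ENNReal.ofReal (1/4) ≤
      (2 : ℝ≥0∞) ^ (2 * (n + 1)) *
        ∫⁻ u in Set.Ioc ((2 : ℝ) ^ (-(1 + m) * ((n : ℝ) + 1))) 1,
          ∫⁻ v in Set.Ioc ((2 : ℝ) ^ (-(1 + m) * ((n : ℝ) + 1))) 1,
            (if (2 : ℝ) ^ (n + 1) ≤ u ^ (-γ) * v ^ (-γ) then (1 : ℝ≥0∞) else 0) := by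
    intro n hn
    set N : ℝ := (n : ℝ) + 1 with hNdef
    have hN1 : (1:ℝ) ≤ N := by rw [hNdef]; linarith [n.cast_nonneg (α := ℝ)]
    set a : ℝ := (2:ℝ) ^ (-(1 + m) * N) with hadef
    set b : ℝ := (2:ℝ) ^ (-(N / (2 * γ))) with hbdef
    have ha0 : 0 < a := Real.rpow_pos_of_pos two_pos _
    have hb0 : 0 < b := Real.rpow_pos_of_pos two_pos _
    have hinv : 1 / (2 * γ) ≤ 1 := by
      rw [div_le_one (by linarith)]; linarith
    have hb1 : b ≤ 1 := Real.rpow_le_one_of_one_le_of_nonpos one_le_two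
      (by rw [neg_nonpos]; positivity)
    have hab : a ≤ b := by
      apply Real.rpow_le_rpow_of_exponent_le one_le_two
      have hNg : N / (2 * γ) = N * (1 / (2 * γ)) := by ring
      nlinarith
    -- pointwise: the indicator is 1 on (a,b]²
    have hbg : b ^ (-γ) = (2:ℝ) ^ (N / 2) := by
      rw [hbdef, ← Real.rpow_mul (by norm_num : (0:ℝ) ≤ 2)]
      congr 1
      field_simp
    have hind : ∀ u ∈ Set.Ioc a b, ∀ v ∈ Set.Ioc a b,
        (2 : ℝ) ^ (n + 1) ≤ u ^ (-γ) * v ^ (-γ) := by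
      intro u hu v hv
      have hu0 : 0 < u := ha0.trans hu.1
      have hv0 : 0 < v := ha0.trans hv.1
      have h1 : b ^ (-γ) ≤ u ^ (-γ) :=
        Real.rpow_le_rpow_of_nonpos hu0 hu.2 (by linarith)
      have h2 : b ^ (-γ) ≤ v ^ (-γ) :=
        Real.rpow_le_rpow_of_nonpos hv0 hv.2 (by linarith)
      have hbgpos : 0 ≤ b ^ (-γ) := Real.rpow_nonneg hb0.le _
      calc (2 : ℝ) ^ (n + 1) = (2:ℝ) ^ (N / 2) * (2:ℝ) ^ (N / 2) := by
            rw [← Real.rpow_add two_pos, ← Real.rpow_natCast (2:ℝ) (n + 1)]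
            congr 1
            push_cast [hNdef]
            ring
        _ = b ^ (-γ) * b ^ (-γ) := by rw [hbg]
        _ ≤ u ^ (-γ) * v ^ (-γ) := mul_le_mul h1 h2 hbgpos (hbgpos.trans h1)
    have inner_ge : ∀ u ∈ Set.Ioc a b,
        ENNReal.ofReal (b - a) ≤ ∫⁻ v in Set.Ioc a 1,
          (if (2 : ℝ) ^ (n + 1) ≤ u ^ (-γ) * v ^ (-γ) then (1 : ℝ≥0∞) else 0) := by
      intro u hu
      calc ENNReal.ofReal (b - a) = volume (Set.Ioc a b) := (Real.volume_Ioc).symm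
        _ = ∫⁻ v in Set.Ioc a b, (1 : ℝ≥0∞) := (setLIntegral_one _).symm
        _ = ∫⁻ v in Set.Ioc a b,
              (if (2 : ℝ) ^ (n + 1) ≤ u ^ (-γ) * v ^ (-γ) then (1 : ℝ≥0∞) else 0) := by
            apply setLIntegral_congr_fun measurableSet_Ioc
            intro v hv
            dsimp only
            rw [if_pos (hind u hu v hv)]
        _ ≤ ∫⁻ v in Set.Ioc a 1,
              (if (2 : ℝ) ^ (n + 1) ≤ u ^ (-γ) * v ^ (-γ) then (1 : ℝ≥0∞) else 0) :=
            lintegral_mono_set (Set.Ioc_subset_Ioc_right hb1)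
    have outer_ge : ENNReal.ofReal (b - a) * ENNReal.ofReal (b - a) ≤
        ∫⁻ u in Set.Ioc a 1, ∫⁻ v in Set.Ioc a 1,
          (if (2 : ℝ) ^ (n + 1) ≤ u ^ (-γ) * v ^ (-γ) then (1 : ℝ≥0∞) else 0) := by
      calc ENNReal.ofReal (b - a) * ENNReal.ofReal (b - a)
          = ENNReal.ofReal (b - a) * volume (Set.Ioc a b) := by rw [Real.volume_Ioc]
        _ = ∫⁻ u in Set.Ioc a b, ENNReal.ofReal (b - a) := (setLIntegral_const _ _).symm
        _ ≤ ∫⁻ u in Set.Ioc a b, ∫⁻ v in Set.Ioc a 1,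
              (if (2 : ℝ) ^ (n + 1) ≤ u ^ (-γ) * v ^ (-γ) then (1 : ℝ≥0∞) else 0) :=
            setLIntegral_mono' measurableSet_Ioc inner_ge
        _ ≤ ∫⁻ u in Set.Ioc a 1, ∫⁻ v in Set.Ioc a 1,
              (if (2 : ℝ) ^ (n + 1) ≤ u ^ (-γ) * v ^ (-γ) then (1 : ℝ≥0∞) else 0) :=
            lintegral_mono_set (Set.Ioc_subset_Ioc_right hb1)
    -- numeric: 2^(n+1) * (b - a) ≥ 1/2
    have hnum : (1:ℝ)/2 ≤ (2:ℝ) ^ (n + 1) * (b - a) := by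
      have hpow : (2:ℝ) ^ (n + 1) = (2:ℝ) ^ (N : ℝ) := by
        rw [← Real.rpow_natCast (2:ℝ) (n + 1)]
        congr 1
        push_cast [hNdef]
        ring
      have h1 : (1:ℝ) ≤ (2:ℝ) ^ (N : ℝ) * b := by
        rw [hbdef, ← Real.rpow_add two_pos]
        apply Real.one_le_rpow one_le_two
        have : N - N / (2 * γ) = N * (1 - 1 / (2 * γ)) := by ring
        nlinarith
      have h2 : (2:ℝ) ^ (N : ℝ) * a ≤ 1/2 := by
        rw [hadef, ← Real.rpow_add two_pos]
        have hmN : 1 ≤ m * N := by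
          have hN₀N : (1:ℝ)/m ≤ N := by
            calc (1:ℝ)/m ≤ (N₀ : ℝ) := hN₀
              _ ≤ (n : ℝ) := by exact_mod_cast hn
              _ ≤ N := by simp [hNdef]
          have hh : m * (1/m) = 1 := by field_simp
          nlinarith
        calc (2:ℝ) ^ (N + -(1 + m) * N) ≤ (2:ℝ) ^ (-1 : ℝ) := by
              apply Real.rpow_le_rpow_of_exponent_le one_le_two
              nlinarith
          _ = 1/2 := by
              rw [Real.rpow_neg_one]
              norm_num
      nlinarith [h1, h2, hpow]
    -- conclude
    calc ENNReal.ofReal (1/4)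
        = (ENNReal.ofReal (1/2)) ^ 2 := by
          rw [← ENNReal.ofReal_pow (by norm_num)]
          norm_num
      _ ≤ (ENNReal.ofReal ((2:ℝ) ^ (n + 1) * (b - a))) ^ 2 := by
          apply pow_le_pow_left' (ENNReal.ofReal_le_ofReal hnum)
      _ = ((2 : ℝ≥0∞) ^ (n + 1) * ENNReal.ofReal (b - a)) ^ 2 := by
          rw [ENNReal.ofReal_mul (by positivity)]
          congr 2
          rw [ENNReal.ofReal_pow (by norm_num : (0:ℝ) ≤ 2)]
          norm_num
      _ = (2 : ℝ≥0∞) ^ (2 * (n + 1)) * (ENNReal.ofReal (b - a) * ENNReal.ofReal (b - a)) := by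
          rw [mul_pow, mul_comm 2 (n+1), pow_mul, sq, sq]
      _ ≤ (2 : ℝ≥0∞) ^ (2 * (n + 1)) *
            ∫⁻ u in Set.Ioc a 1, ∫⁻ v in Set.Ioc a 1,
              (if (2 : ℝ) ^ (n + 1) ≤ u ^ (-γ) * v ^ (-γ) then (1 : ℝ≥0∞) else 0) :=
          mul_le_mul_right outer_ge _
  have hsub : Set.Ici N₀ ⊆ {n : ℕ | ENNReal.ofReal (1/4) ≤
      (2 : ℝ≥0∞) ^ (2 * (n + 1)) *
        ∫⁻ u in Set.Ioc ((2 : ℝ) ^ (-(1 + m) * ((n : ℝ) + 1))) 1,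
          ∫⁻ v in Set.Ioc ((2 : ℝ) ^ (-(1 + m) * ((n : ℝ) + 1))) 1,
            (if (2 : ℝ) ^ (n + 1) ≤ u ^ (-γ) * v ^ (-γ) then (1 : ℝ≥0∞) else 0)} :=
    fun n hn => key n hn
  exact (Set.Ici_infinite N₀).mono hsub hfin


/-- For the connection function `φ(u,v,x) = 1{x ≤ u^{−γ} v^{−γ}}` with `γ ∈ (0,1)`
(the weak local limit of hyperbolic random graphs), condition (2.3) of the paper —
the existence of `m > 0` with
`Σ_{n≥1} 2^{2n} ∫_{2^{−n−mn}}^1 ∫_{2^{−n−mn}}^1 φ(u,v,2^n) du dv < ∞` —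
holds if and only if `γ < 1/2`. -/
theorem hyperbolic_condition_iff (γ : ℝ) (hγ : γ ∈ Set.Ioo (0 : ℝ) 1) :
    (∃ m : ℝ, 0 < m ∧
      (∑' n : ℕ, (2 : ℝ≥0∞) ^ (2 * (n + 1)) *
        ∫⁻ u in Set.Ioc ((2 : ℝ) ^ (-(1 + m) * ((n : ℝ) + 1))) 1,
          ∫⁻ v in Set.Ioc ((2 : ℝ) ^ (-(1 + m) * ((n : ℝ) + 1))) 1,
            (if (2 : ℝ) ^ (n + 1) ≤ u ^ (-γ) * v ^ (-γ) then (1 : ℝ≥0∞) else 0)) ≠ ⊤)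
    ↔ γ < 1 / 2 := by
  constructor
  · rintro ⟨m, hm, hne⟩
    by_contra hhalf
    push_neg at hhalf
    exact hne (lower γ m hγ.1 hhalf hm)
  · intro hhalf
    exact ⟨1, one_pos, upper γ hγ hhalf⟩
end
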